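/- arXiv:2310.17757 — 3 statements merged into one kernel-verified Lean document; each statement's English description precedes it below -/
import Mathlib

section
/- Let T be a finite tree and v a vertex of T. Then N_v N_T − N_v² + N_T − N_v ≥ 3(R_T − R_v). -/
set_option linter.unusedSectionVars false
set_option maxHeartbeats 1000000


variable {V : Type*}

/-- A subtree of a graph: a nonempty set of vertices inducing a connected subgraph. -/
def IsSubtree (G : SimpleGraph V) (s : Finset V) : Prop :=
  s.Nonempty ∧ (G.induce (s : Set V)).Connected

open Classical in
/-- `N_T`: the number of subtrees of `G`. -/
noncomputable def numSubtrees [Fintype V] (G : SimpleGraph V) : ℕ :=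
  (Finset.univ.filter fun s : Finset V => IsSubtree G s).card

open Classical in
/-- `R_T`: the sum of the orders of all subtrees of `G`. -/
noncomputable def sumSubtrees [Fintype V] (G : SimpleGraph V) : ℕ :=
  ∑ s ∈ Finset.univ.filter (fun s : Finset V => IsSubtree G s), s.card

open Classical in
/-- `N_v`: the number of subtrees of `G` containing `v`. -/
noncomputable def numSubtreesAt [Fintype V] (G : SimpleGraph V) (v : V) : ℕ :=
  (Finset.univ.filter fun s : Finset V => IsSubtree G s ∧ v ∈ s).card

open Classical in
/-- `R_v`: the sum of the orders of all subtrees of `G` containing `v`. -/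
noncomputable def sumSubtreesAt [Fintype V] (G : SimpleGraph V) (v : V) : ℕ :=
  ∑ s ∈ Finset.univ.filter (fun s : Finset V => IsSubtree G s ∧ v ∈ s), s.card

/-- `μ_T`: the mean subtree order (global mean) of `G`. -/
noncomputable def meanSubtreeOrder [Fintype V] (G : SimpleGraph V) : ℚ :=
  (sumSubtrees G : ℚ) / (numSubtrees G : ℚ)

/-- `μ_T(v)`: the local mean of `G` at `v`. -/
noncomputable def localMean [Fintype V] (G : SimpleGraph V) (v : V) : ℚ :=
  (sumSubtreesAt G v : ℚ) / (numSubtreesAt G v : ℚ)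

/-- The tree obtained by contracting the edge `uv`: the vertex `v` is merged into `u`. -/
def contractEdge (G : SimpleGraph V) (u v : V) : SimpleGraph {x : V // x ≠ v} where
  Adj a b := a ≠ b ∧ (G.Adj a.1 b.1 ∨ (a.1 = u ∧ G.Adj v b.1) ∨ (b.1 = u ∧ G.Adj v a.1))
  symm := by
    constructor
    rintro a b ⟨hne, h⟩
    refine ⟨hne.symm, ?_⟩
    rcases h with h | h | h
    · exact Or.inl h.symm
    · exact Or.inr (Or.inr h)
    · exact Or.inr (Or.inl h)
  loopless := by constructor; rintro a ⟨hne, -⟩; exact hne rfl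

namespace SubtreeProof

variable [DecidableEq V] {G : SimpleGraph V}

/-! ### The unique path in a tree and its support -/

noncomputable def pth (hT : G.IsTree) (x y : V) : G.Walk x y :=
  (hT.existsUnique_path x y).exists.choose

lemma pth_isPath (hT : G.IsTree) (x y : V) : (pth hT x y).IsPath :=
  (hT.existsUnique_path x y).exists.choose_spec

lemma pth_eq (hT : G.IsTree) {x y : V} (w : G.Walk x y) (hw : w.IsPath) :
    w = pth hT x y :=
  ((hT.existsUnique_path x y).unique hw (pth_isPath hT x y))

noncomputable def P (hT : G.IsTree) (x y : V) : Finset V :=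
  (pth hT x y).support.toFinset

lemma mem_P (hT : G.IsTree) {x y z : V} :
    z ∈ P hT x y ↔ z ∈ (pth hT x y).support := by
  simp [P]

lemma P_subset_walk (hT : G.IsTree) {x y : V} (w : G.Walk x y) :
    P hT x y ⊆ w.support.toFinset := by
  intro z hz
  rw [mem_P] at hz
  rw [List.mem_toFinset]
  have := pth_eq hT (w.toPath : G.Walk x y) (w.toPath.2)
  rw [← this] at hz
  exact w.support_toPath_subset hz

lemma left_mem_P (hT : G.IsTree) (x y : V) : x ∈ P hT x y := by
  rw [mem_P]; exact (pth hT x y).start_mem_support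

lemma right_mem_P (hT : G.IsTree) (x y : V) : y ∈ P hT x y := by
  rw [mem_P]; exact (pth hT x y).end_mem_support

lemma P_symm (hT : G.IsTree) (x y : V) : P hT x y = P hT y x := by
  have : (pth hT x y).reverse = pth hT y x :=
    pth_eq hT _ ((pth_isPath hT x y).reverse)
  ext z
  rw [P, P, List.mem_toFinset, List.mem_toFinset, ← this,
    SimpleGraph.Walk.support_reverse, List.mem_reverse]

lemma P_self (hT : G.IsTree) (x : V) : P hT x x = {x} := by
  have : (SimpleGraph.Walk.nil : G.Walk x x) = pth hT x x := pth_eq hT _ (by simp)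
  simp [P, ← this]

lemma P_triangle (hT : G.IsTree) (x y z : V) : P hT x y ⊆ P hT x z ∪ P hT z y := by
  have h := P_subset_walk hT ((pth hT x z).append (pth hT z y))
  intro w hw
  have := h hw
  rw [List.mem_toFinset, SimpleGraph.Walk.mem_support_append_iff] at this
  rcases this with h1 | h1
  · exact Finset.mem_union_left _ (by rw [mem_P]; exact h1)
  · exact Finset.mem_union_right _ (by rw [mem_P]; exact h1)

lemma P_adj (hT : G.IsTree) {x y : V} (h : G.Adj x y) : P hT x y = {x, y} := by
  have : (SimpleGraph.Path.singleton h : G.Walk x y) = pth hT x y :=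
    pth_eq hT _ (SimpleGraph.Path.singleton h).2
  ext z
  rw [P, List.mem_toFinset, ← this]
  simp [SimpleGraph.Walk.support_cons]

lemma P_extend (hT : G.IsTree) {x u v : V} (h : G.Adj u v) (hu : u ∉ P hT x v) :
    P hT x u = P hT x v ∪ {u} := by
  have hnp : u ∉ (pth hT x v).support := fun hc => hu ((mem_P hT).2 hc)
  have hp : ((pth hT x v).append (SimpleGraph.Walk.cons h.symm SimpleGraph.Walk.nil)).IsPath := by
    rw [SimpleGraph.Walk.isPath_def, SimpleGraph.Walk.support_append]
    simp only [SimpleGraph.Walk.support_cons, SimpleGraph.Walk.support_nil]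
    simp only [List.tail_cons, List.nodup_append]
    refine ⟨(pth_isPath hT x v).support_nodup, by simp, ?_⟩
    intro a ha; simp only [List.mem_singleton]
    intro b hb hab; subst hb; subst hab; exact hnp ha
  have := pth_eq hT _ hp
  ext z
  rw [P, List.mem_toFinset, ← this, SimpleGraph.Walk.mem_support_append_iff]
  have hv : v ∈ (pth hT x v).support := SimpleGraph.Walk.end_mem_support _
  have hv' : z = v → z ∈ (pth hT x v).support := fun h => h ▸ hv
  simp only [SimpleGraph.Walk.support_cons, SimpleGraph.Walk.support_nil, List.mem_cons,
    List.not_mem_nil, or_false, Finset.mem_union, Finset.mem_singleton, mem_P]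
  tauto

lemma P_split (hT : G.IsTree) {x y z : V} (hz : z ∈ P hT x y) :
    P hT x y = P hT x z ∪ P hT z y := by
  have hzs : z ∈ (pth hT x y).support := (mem_P hT).1 hz
  have h1 : ((pth hT x y).takeUntil z hzs) = pth hT x z :=
    pth_eq hT _ ((pth_isPath hT x y).takeUntil hzs)
  have h2 : ((pth hT x y).dropUntil z hzs) = pth hT z y :=
    pth_eq hT _ ((pth_isPath hT x y).dropUntil hzs)
  have hspec := SimpleGraph.Walk.take_spec (pth hT x y) hzs
  ext w
  have hmem : w ∈ (((pth hT x y).takeUntil z hzs).append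
      ((pth hT x y).dropUntil z hzs)).support
      ↔ w ∈ ((pth hT x y).takeUntil z hzs).support
        ∨ w ∈ ((pth hT x y).dropUntil z hzs).support :=
    SimpleGraph.Walk.mem_support_append_iff _ _
  rw [hspec] at hmem
  rw [Finset.mem_union, mem_P, mem_P, mem_P, ← h1, ← h2]
  exact hmem

lemma P_antisymm (hT : G.IsTree) {x y z : V} (hz : z ∈ P hT x y) (hy : y ∈ P hT x z) :
    y = z := by
  have hzs : z ∈ (pth hT x y).support := (mem_P hT).1 hz
  have h1 : ((pth hT x y).takeUntil z hzs) = pth hT x z :=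
    pth_eq hT _ ((pth_isPath hT x y).takeUntil hzs)
  have hy' : y ∈ ((pth hT x y).takeUntil z hzs).support := by
    rw [h1]; exact (mem_P hT).1 hy
  have hspec := SimpleGraph.Walk.take_spec (pth hT x y) hzs
  have hnodup : ((pth hT x y).support).Nodup := (pth_isPath hT x y).support_nodup
  have hsupp : (pth hT x y).support
      = ((pth hT x y).takeUntil z hzs).support
        ++ ((pth hT x y).dropUntil z hzs).support.tail := by
    rw [← SimpleGraph.Walk.support_append, hspec]
  rw [hsupp] at hnodup
  have hdisj := (List.nodup_append.1 hnodup).2.2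
  have hyd : y ∈ ((pth hT x y).dropUntil z hzs).support :=
    SimpleGraph.Walk.end_mem_support _
  rw [SimpleGraph.Walk.support_eq_cons] at hyd
  rcases List.mem_cons.1 hyd with h | h
  · exact h
  · exact absurd h (by intro hc; exact (hdisj y hy' y hc rfl))

/-! ### Good sets (subtrees as geodesically closed sets) -/

def good (hT : G.IsTree) (s : Finset V) : Prop :=
  s.Nonempty ∧ ∀ x ∈ s, ∀ y ∈ s, P hT x y ⊆ s

lemma isSubtree_iff_good (hT : G.IsTree) (s : Finset V) :
    IsSubtree G s ↔ good hT s := by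
  rw [IsSubtree, good, SimpleGraph.connected_induce_iff,
    SimpleGraph.Subgraph.connected_iff_forall_exists_walk_subgraph]
  simp only [SimpleGraph.Subgraph.induce_verts, Set.Nonempty, Set.mem_setOf_eq,
    Finset.coe_nonempty]
  constructor
  · rintro ⟨hne, -, hwalk⟩
    refine ⟨hne, fun x hx y hy => ?_⟩
    obtain ⟨p, hp⟩ := hwalk (by exact hx) (by exact hy)
    have hverts := hp.1
    rw [SimpleGraph.Walk.verts_toSubgraph] at hverts
    intro z hz
    have hz' := P_subset_walk hT p hz
    rw [List.mem_toFinset] at hz'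
    exact hverts hz'
  · rintro ⟨hne, hgood⟩
    have key : ∀ x ∈ s, ∀ y ∈ s,
        (pth hT x y).toSubgraph ≤ (⊤ : G.Subgraph).induce (s : Set V) := by
      intro x hx y hy
      calc (pth hT x y).toSubgraph
          ≤ (⊤ : G.Subgraph).induce {z | z ∈ (pth hT x y).support} :=
            SimpleGraph.Walk.toSubgraph_le_induce_support _
        _ ≤ (⊤ : G.Subgraph).induce (s : Set V) := by
            apply SimpleGraph.Subgraph.induce_mono_right
            intro z hz
            exact hgood x hx y hy ((mem_P hT).2 hz)
    refine ⟨hne, hne.imp (fun a ha => by exact ha), ?_⟩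
    intro x y hx hy
    exact ⟨pth hT x y, key x hx y hy⟩

lemma good_singleton (hT : G.IsTree) (x : V) : good hT {x} := by
  refine ⟨⟨x, Finset.mem_singleton_self x⟩, ?_⟩
  intro a ha b hb
  rw [Finset.mem_singleton] at ha hb
  subst ha; subst hb
  rw [P_self]

lemma good_inter (hT : G.IsTree) {s t : Finset V} (hs : good hT s) (ht : good hT t)
    (hne : (s ∩ t).Nonempty) : good hT (s ∩ t) := by
  refine ⟨hne, fun x hx y hy => ?_⟩
  rw [Finset.mem_inter] at hx hy
  intro z hz
  exact Finset.mem_inter.2 ⟨hs.2 x hx.1 y hy.1 hz, ht.2 x hx.2 y hy.2 hz⟩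

lemma good_union (hT : G.IsTree) {s t : Finset V} {v u : V} (hadj : G.Adj v u)
    (hs : good hT s) (ht : good hT t) (hv : v ∈ s) (hu : u ∈ t) :
    good hT (s ∪ t) := by
  have key : ∀ x ∈ s, ∀ y ∈ t, P hT x y ⊆ s ∪ t := by
    intro x hx y hy
    intro z hz
    have h1 := P_triangle hT x y v hz
    rw [Finset.mem_union] at h1
    rcases h1 with h1 | h1
    · exact Finset.mem_union_left _ (hs.2 x hx v hv h1)
    · -- z ∈ P v y ⊆ P v u ∪ P u y
      have h2 := P_triangle hT v y u h1
      rw [Finset.mem_union] at h2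
      rcases h2 with h2 | h2
      · -- z ∈ P v u = {v, u}
        rw [P_adj hT hadj] at h2
        rcases Finset.mem_insert.1 h2 with rfl | h3
        · exact Finset.mem_union_left _ hv
        · rw [Finset.mem_singleton] at h3; subst h3
          exact Finset.mem_union_right _ hu
      · exact Finset.mem_union_right _ (ht.2 u hu y hy h2)
  refine ⟨hs.1.mono Finset.subset_union_left, fun x hx y hy => ?_⟩
  rw [Finset.mem_union] at hx hy
  rcases hx with hx | hx <;> rcases hy with hy | hy
  · exact (hs.2 x hx y hy).trans Finset.subset_union_left
  · exact key x hx y hy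
  · rw [P_symm]; exact key y hy x hx
  · exact (ht.2 x hx y hy).trans Finset.subset_union_right

end SubtreeProof

namespace SubtreeProof
variable [DecidableEq V] {G : SimpleGraph V}

section Decomp

variable (hT : G.IsTree) (A : Finset V) (v u : V)

/-- vertices of `A` on the `v` side of the edge `vu` -/
noncomputable def B1 : Finset V := A.filter (fun z => u ∉ P hT v z)

/-- vertices of `A` on the `u` side of the edge `vu` -/
noncomputable def B2 : Finset V := A.filter (fun z => u ∈ P hT v z)

variable {hT A v u}

lemma mem_B1 {z : V} : z ∈ B1 hT A v u ↔ z ∈ A ∧ u ∉ P hT v z := by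
  simp [B1]

lemma mem_B2 {z : V} : z ∈ B2 hT A v u ↔ z ∈ A ∧ u ∈ P hT v z := by
  simp [B2]

variable (hadj : G.Adj v u) (hA : good hT A) (hv : v ∈ A) (hu : u ∈ A)

include hadj hv in
lemma v_mem_B1 : v ∈ B1 hT A v u := by
  rw [mem_B1, P_self]
  exact ⟨hv, by simp [hadj.ne']⟩

include hu in
lemma u_mem_B2 : u ∈ B2 hT A v u := by
  rw [mem_B2]
  exact ⟨hu, right_mem_P hT v u⟩

lemma B1_union_B2 : B1 hT A v u ∪ B2 hT A v u = A := by
  ext z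
  simp only [Finset.mem_union, mem_B1, mem_B2]
  tauto

lemma B1_disj_B2 : Disjoint (B1 hT A v u) (B2 hT A v u) := by
  rw [Finset.disjoint_left]
  intro z h1 h2
  exact (mem_B1.1 h1).2 (mem_B2.1 h2).2

include hA hadj hv in
lemma good_B1 : good hT (B1 hT A v u) := by
  refine ⟨⟨v, v_mem_B1 hadj hv⟩, fun x hx y hy => ?_⟩
  rw [mem_B1] at hx hy
  intro z hz
  rw [mem_B1]
  refine ⟨hA.2 x hx.1 y hy.1 hz, fun hc => ?_⟩
  -- u ∈ P v z ⊆ P v x ∪ P x z ⊆ P v x ∪ P x y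
  have h1 := P_triangle hT v z x hc
  rw [Finset.mem_union] at h1
  rcases h1 with h1 | h1
  · exact hx.2 h1
  · have hxz : P hT x z ⊆ P hT x y := by
      rw [P_split hT hz]; exact Finset.subset_union_left
    have h2 := P_triangle hT x y v (hxz h1)
    rw [Finset.mem_union] at h2
    rcases h2 with h2 | h2
    · rw [P_symm] at h2; exact hx.2 h2
    · exact hy.2 h2

include hA in
lemma good_B2 (hu : u ∈ A) : good hT (B2 hT A v u) := by
  have sub : ∀ x z : V, u ∈ P hT v x → u ∉ P hT v z → z ∈ P hT x u → False := by
    intro x z h1 h2 h3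
    -- z ∈ P v x
    have hz1 : z ∈ P hT v x := by
      rw [P_split hT h1]
      exact Finset.mem_union_right _ (by rwa [P_symm] at h3)
    -- u ∈ P z x, i.e. u ∈ P x z
    have hu1 : u ∈ P hT x z := by
      have := P_split hT hz1
      rw [this, Finset.mem_union] at h1
      rcases h1 with h1 | h1
      · exact absurd h1 h2
      · rwa [P_symm] at h1
    have : u = z := P_antisymm hT h3 hu1
    subst this
    exact h2 (right_mem_P hT v u)
  refine ⟨⟨u, u_mem_B2 hu⟩, fun x hx y hy => ?_⟩
  rw [mem_B2] at hx hy
  intro z hz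
  rw [mem_B2]
  refine ⟨hA.2 x hx.1 y hy.1 hz, by_contra fun hc => ?_⟩
  have h1 := P_triangle hT x y u hz
  rw [Finset.mem_union] at h1
  rcases h1 with h1 | h1
  · exact sub x z hx.2 hc h1
  · rw [P_symm] at h1
    exact sub y z hy.2 hc h1

include hadj in
lemma crossing {s : Finset V} (hs : good hT s) (hsA : s ⊆ A)
    {x y : V} (hx1 : x ∈ s) (hx2 : x ∈ B1 hT A v u)
    (hy1 : y ∈ s) (hy2 : y ∈ B2 hT A v u) : v ∈ s ∧ u ∈ s := by
  rw [mem_B1] at hx2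
  rw [mem_B2] at hy2
  -- u ∈ P x y
  have hu' : u ∈ P hT x y := by
    by_contra hc
    have h1 := P_triangle hT v y x hy2.2
    rw [Finset.mem_union] at h1
    rcases h1 with h1 | h1
    · exact hx2.2 h1
    · exact hc h1
  -- v ∈ P x u
  have hv' : v ∈ P hT x u := by
    have hxv : u ∉ P hT x v := by rw [P_symm]; exact hx2.2
    rw [P_extend hT hadj.symm hxv]
    exact Finset.mem_union_left _ (right_mem_P hT x v)
  have hvxy : v ∈ P hT x y := by
    rw [P_split hT hu']
    exact Finset.mem_union_left _ hv'
  exact ⟨hs.2 x hx1 y hy1 hvxy, hs.2 x hx1 y hy1 hu'⟩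

end Decomp

end SubtreeProof

namespace SubtreeProof
variable [DecidableEq V] {G : SimpleGraph V} [Fintype V]

open Classical in
noncomputable def SS (hT : G.IsTree) (A : Finset V) : Finset (Finset V) :=
  Finset.univ.filter (fun s => good hT s ∧ s ⊆ A)

open Classical in
noncomputable def SV (hT : G.IsTree) (A : Finset V) (v : V) : Finset (Finset V) :=
  Finset.univ.filter (fun s => good hT s ∧ s ⊆ A ∧ v ∈ s)

open Classical in
noncomputable def XX (hT : G.IsTree) (A : Finset V) (v u : V) : Finset (Finset V) :=
  Finset.univ.filter (fun s => good hT s ∧ s ⊆ A ∧ v ∈ s ∧ u ∈ s)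

lemma mem_SS {hT : G.IsTree} {A s : Finset V} :
    s ∈ SS hT A ↔ good hT s ∧ s ⊆ A := by
  simp [SS]

lemma mem_SV {hT : G.IsTree} {A s : Finset V} {v : V} :
    s ∈ SV hT A v ↔ good hT s ∧ s ⊆ A ∧ v ∈ s := by
  simp [SV]

lemma mem_XX {hT : G.IsTree} {A s : Finset V} {v u : V} :
    s ∈ XX hT A v u ↔ good hT s ∧ s ⊆ A ∧ v ∈ s ∧ u ∈ s := by
  simp [XX]

lemma SV_subset_SS {hT : G.IsTree} {A : Finset V} {v : V} : SV hT A v ⊆ SS hT A := by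
  intro s hs
  rw [mem_SV] at hs
  exact mem_SS.2 ⟨hs.1, hs.2.1⟩

lemma singleton_mem_SV {hT : G.IsTree} {A : Finset V} {v : V} (hv : v ∈ A) :
    ({v} : Finset V) ∈ SV hT A v :=
  mem_SV.2 ⟨good_singleton hT v, Finset.singleton_subset_iff.2 hv, Finset.mem_singleton_self v⟩

section Split

variable {hT : G.IsTree} {A : Finset V} {v u : V}
variable (hadj : G.Adj v u) (hA : good hT A) (hv : v ∈ A) (hu : u ∈ A)

include hadj hA hv hu

lemma SS_split :
    SS hT A = (SS hT (B1 hT A v u) ∪ SS hT (B2 hT A v u)) ∪ XX hT A v u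
    := by
  ext s
  simp only [Finset.mem_union, mem_SS, mem_XX]
  constructor
  · rintro ⟨hg, hs⟩
    by_cases h1 : s ⊆ B1 hT A v u
    · exact Or.inl (Or.inl ⟨hg, h1⟩)
    by_cases h2 : s ⊆ B2 hT A v u
    · exact Or.inl (Or.inr ⟨hg, h2⟩)
    · obtain ⟨x, hx, hx1⟩ := Finset.not_subset.1 h1
      obtain ⟨y, hy, hy1⟩ := Finset.not_subset.1 h2
      have hx2 : x ∈ B2 hT A v u := by
        have := hs hx
        rw [← B1_union_B2 (hT := hT) (A := A) (v := v) (u := u), Finset.mem_union] at this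
        tauto
      have hy2 : y ∈ B1 hT A v u := by
        have := hs hy
        rw [← B1_union_B2 (hT := hT) (A := A) (v := v) (u := u), Finset.mem_union] at this
        tauto
      have := crossing hadj hg hs hy hy2 hx hx2
      exact Or.inr ⟨hg, hs, this⟩
  · have hB1A : B1 hT A v u ⊆ A := Finset.filter_subset _ _
    have hB2A : B2 hT A v u ⊆ A := Finset.filter_subset _ _
    rintro ((⟨hg, hs⟩ | ⟨hg, hs⟩) | ⟨hg, hs, _⟩)
    · exact ⟨hg, hs.trans hB1A⟩
    · exact ⟨hg, hs.trans hB2A⟩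
    · exact ⟨hg, hs⟩

lemma SS_split_disj1 :
    Disjoint (SS hT (B1 hT A v u)) (SS hT (B2 hT A v u)) := by
  rw [Finset.disjoint_left]
  intro s h1 h2
  rw [mem_SS] at h1 h2
  obtain ⟨x, hx⟩ := h1.1.1
  exact Finset.disjoint_left.1 (B1_disj_B2 (hT := hT) (A := A) (v := v) (u := u))
    (h1.2 hx) (h2.2 hx)

lemma SS_split_disj2 :
    Disjoint (SS hT (B1 hT A v u) ∪ SS hT (B2 hT A v u)) (XX hT A v u) := by
  rw [Finset.disjoint_left]
  intro s h1 h2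
  rw [Finset.mem_union] at h1
  rw [mem_XX] at h2
  rcases h1 with h1 | h1 <;> rw [mem_SS] at h1
  · exact Finset.disjoint_left.1 (B1_disj_B2 (hT := hT) (A := A) (v := v) (u := u))
      (h1.2 h2.2.2.2) (u_mem_B2 hu)
  · exact Finset.disjoint_left.1 (B1_disj_B2 (hT := hT) (A := A) (v := v) (u := u))
      (v_mem_B1 hadj hv) (h1.2 h2.2.2.1)

lemma SV_split :
    SV hT A v = SV hT (B1 hT A v u) v ∪ XX hT A v u := by
  ext s
  simp only [Finset.mem_union, mem_SV, mem_XX]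
  constructor
  · rintro ⟨hg, hs, hvs⟩
    by_cases h1 : s ⊆ B1 hT A v u
    · exact Or.inl ⟨hg, h1, hvs⟩
    · obtain ⟨x, hx, hx1⟩ := Finset.not_subset.1 h1
      have hx2 : x ∈ B2 hT A v u := by
        have := hs hx
        rw [← B1_union_B2 (hT := hT) (A := A) (v := v) (u := u), Finset.mem_union] at this
        tauto
      have := crossing hadj hg hs hvs (v_mem_B1 hadj hv) hx hx2
      exact Or.inr ⟨hg, hs, this⟩
  · rintro (⟨hg, hs, hvs⟩ | ⟨hg, hs, hvs, -⟩)
    · exact ⟨hg, hs.trans (Finset.filter_subset _ _), hvs⟩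
    · exact ⟨hg, hs, hvs⟩

lemma SV_split_disj :
    Disjoint (SV hT (B1 hT A v u) v) (XX hT A v u) := by
  rw [Finset.disjoint_left]
  intro s h1 h2
  rw [mem_SV] at h1
  rw [mem_XX] at h2
  exact Finset.disjoint_left.1 (B1_disj_B2 (hT := hT) (A := A) (v := v) (u := u))
    (h1.2.1 h2.2.2.2) (u_mem_B2 hu)

lemma XX_sum {M : Type*} [AddCommMonoid M] (g : Finset V → M) :
    ∑ s ∈ XX hT A v u, g s
      = ∑ p ∈ (SV hT (B1 hT A v u) v) ×ˢ (SV hT (B2 hT A v u) u), g (p.1 ∪ p.2) := by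
  apply Finset.sum_nbij' (i := fun s => (s ∩ B1 hT A v u, s ∩ B2 hT A v u))
    (j := fun p => p.1 ∪ p.2)
  · intro s hs
    rw [mem_XX] at hs
    obtain ⟨hg, hsA, hvs, hus⟩ := hs
    rw [Finset.mem_product]
    constructor
    · rw [mem_SV]
      have hvm : v ∈ s ∩ B1 hT A v u := Finset.mem_inter.2 ⟨hvs, v_mem_B1 hadj hv⟩
      exact ⟨good_inter hT hg (good_B1 hadj hA hv) ⟨v, hvm⟩,
        Finset.inter_subset_right, hvm⟩
    · rw [mem_SV]
      have hum : u ∈ s ∩ B2 hT A v u := Finset.mem_inter.2 ⟨hus, u_mem_B2 hu⟩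
      exact ⟨good_inter hT hg (good_B2 hA hu) ⟨u, hum⟩,
        Finset.inter_subset_right, hum⟩
  · intro p hp
    rw [Finset.mem_product] at hp
    obtain ⟨h1, h2⟩ := hp
    rw [mem_SV] at h1 h2
    rw [mem_XX]
    refine ⟨good_union hT hadj h1.1 h2.1 h1.2.2 h2.2.2, ?_,
      Finset.mem_union_left _ h1.2.2, Finset.mem_union_right _ h2.2.2⟩
    exact Finset.union_subset (h1.2.1.trans (Finset.filter_subset _ _))
      (h2.2.1.trans (Finset.filter_subset _ _))
  · intro s hs
    rw [mem_XX] at hs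
    rw [← Finset.inter_union_distrib_left, B1_union_B2, Finset.inter_eq_left]
    exact hs.2.1
  · intro p hp
    rw [Finset.mem_product] at hp
    obtain ⟨h1, h2⟩ := hp
    rw [mem_SV] at h1 h2
    have hd := B1_disj_B2 (hT := hT) (A := A) (v := v) (u := u)
    have e1 : (p.1 ∪ p.2) ∩ B1 hT A v u = p.1 := by
      rw [Finset.union_inter_distrib_right, Finset.inter_eq_left.2 h1.2.1,
        Finset.disjoint_iff_inter_eq_empty.1 (hd.symm.mono_left h2.2.1),
        Finset.union_empty]
    have e2 : (p.1 ∪ p.2) ∩ B2 hT A v u = p.2 := by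
      rw [Finset.union_inter_distrib_right, Finset.inter_eq_left.2 h2.2.1,
        Finset.disjoint_iff_inter_eq_empty.1 (hd.mono_left h1.2.1),
        Finset.empty_union]
    show ((p.1 ∪ p.2) ∩ B1 hT A v u, (p.1 ∪ p.2) ∩ B2 hT A v u) = p
    rw [e1, e2]
  · intro s hs
    rw [mem_XX] at hs
    have : (s ∩ B1 hT A v u) ∪ (s ∩ B2 hT A v u) = s := by
      rw [← Finset.inter_union_distrib_left, B1_union_B2, Finset.inter_eq_left]
      exact hs.2.1
    rw [this]

end Split

end SubtreeProof

namespace SubtreeProof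


lemma arith_main (n1 n2 r1 r2 a1 a2 p1 p2 : ℤ)
    (hC1 : n1 ≤ a1 ^ 2) (hC2 : n2 ≤ a2 ^ 2)
    (hB1 : 3 * p1 ≤ n1 + a1 * (a1 + 1)) (hB2 : 3 * p2 ≤ n2 + a2 * (a2 + 1))
    (hF1 : 3 * r1 + (a1 + 1) * a1 ≤ (a1 + 1) * n1 + 3 * p1)
    (hF2 : 3 * r2 + (a2 + 1) * a2 ≤ (a2 + 1) * n2 + 3 * p2)
    (ha1 : 1 ≤ a1) (ha2 : 1 ≤ a2) (hn1 : a1 ≤ n1) (hn2 : a2 ≤ n2) :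
    n1 + n2 + a1 * a2 ≤ (a1 + a1 * a2) ^ 2 ∧
    3 * (p1 + (p1 * a2 + a1 * p2)) ≤ n1 + n2 + a1 * a2
        + (a1 + a1 * a2) * (a1 + a1 * a2 + 1) ∧
    3 * (r1 + r2 + (p1 * a2 + a1 * p2)) + (a1 + a1 * a2 + 1) * (a1 + a1 * a2)
        ≤ (a1 + a1 * a2 + 1) * (n1 + n2 + a1 * a2) + 3 * (p1 + (p1 * a2 + a1 * p2)) := by
  have h0 : (0:ℤ) ≤ a1 - 1 := by linarith
  have h0' : (0:ℤ) ≤ a2 := by linarith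
  refine ⟨?_, ?_, ?_⟩
  · nlinarith [mul_le_mul_of_nonneg_right hC2 (by positivity : (0:ℤ) ≤ a1^2),
      sq_nonneg a1, sq_nonneg a2]
  · nlinarith [mul_le_mul_of_nonneg_right hB1 (by linarith : (0:ℤ) ≤ a2 + 1),
      mul_le_mul_of_nonneg_right hB2 (by linarith : (0:ℤ) ≤ a1),
      mul_le_mul_of_nonneg_right hC1 h0',
      mul_le_mul_of_nonneg_right hC2 h0,
      sq_nonneg ((a1-1)*a2)]
  · nlinarith [hF1, hF2, hB2,
      mul_nonneg (mul_nonneg h0 (by linarith : (0:ℤ) ≤ 1 + a2)) (by linarith : (0:ℤ) ≤ n2),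
      mul_nonneg (mul_nonneg (by linarith : (0:ℤ) ≤ a1) h0') (by linarith : (0:ℤ) ≤ n1 - a1)]

variable [DecidableEq V] {G : SimpleGraph V} [Fintype V]

section Split2

variable {hT : G.IsTree} {A : Finset V} {v u : V}
variable (hadj : G.Adj v u) (hA : good hT A) (hv : v ∈ A) (hu : u ∈ A)

include hadj hA hv hu

lemma XX_card :
    (XX hT A v u).card
      = (SV hT (B1 hT A v u) v).card * (SV hT (B2 hT A v u) u).card := by
  rw [Finset.card_eq_sum_ones, XX_sum hadj hA hv hu (fun _ => (1 : ℕ))]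
  rw [← Finset.card_eq_sum_ones, Finset.card_product]

lemma XX_sum_card :
    ∑ s ∈ XX hT A v u, s.card
      = (∑ s ∈ SV hT (B1 hT A v u) v, s.card) * (SV hT (B2 hT A v u) u).card
        + (SV hT (B1 hT A v u) v).card * (∑ s ∈ SV hT (B2 hT A v u) u, s.card) := by
  rw [XX_sum hadj hA hv hu Finset.card]
  have hcong : ∀ p ∈ (SV hT (B1 hT A v u) v) ×ˢ (SV hT (B2 hT A v u) u),
      (p.1 ∪ p.2).card = p.1.card + p.2.card := by
    intro p hp
    rw [Finset.mem_product] at hp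
    obtain ⟨h1, h2⟩ := hp
    rw [mem_SV] at h1 h2
    exact Finset.card_union_of_disjoint
      ((B1_disj_B2 (hT := hT) (A := A) (v := v) (u := u)).mono h1.2.1 h2.2.1)
  rw [Finset.sum_congr rfl hcong, Finset.sum_product]
  simp only [Finset.sum_add_distrib, Finset.sum_const, smul_eq_mul]
  congr 1
  rw [Finset.sum_mul]
  exact Finset.sum_congr rfl fun x _ => mul_comm _ _

end Split2

lemma SS_singleton (hT : G.IsTree) (w : V) : SS hT {w} = {{w}} := by
  ext s
  rw [mem_SS, Finset.mem_singleton]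
  constructor
  · rintro ⟨hg, hs⟩
    exact (Finset.Nonempty.subset_singleton_iff hg.1).1 hs
  · rintro rfl
    exact ⟨good_singleton hT w, le_refl _⟩

lemma SV_singleton (hT : G.IsTree) (w : V) : SV hT {w} w = {{w}} := by
  ext s
  rw [mem_SV, Finset.mem_singleton]
  constructor
  · rintro ⟨hg, hs, -⟩
    exact (Finset.Nonempty.subset_singleton_iff hg.1).1 hs
  · rintro rfl
    exact ⟨good_singleton hT w, le_refl _, Finset.mem_singleton_self w⟩

theorem master (hT : G.IsTree) : ∀ (N : ℕ) (A : Finset V) (v : V),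
    A.card ≤ N → good hT A → v ∈ A →
    (SS hT A).card ≤ (SV hT A v).card ^ 2
  ∧ 3 * (∑ s ∈ SV hT A v, s.card)
      ≤ (SS hT A).card + (SV hT A v).card * ((SV hT A v).card + 1)
  ∧ 3 * (∑ s ∈ SS hT A, s.card) + ((SV hT A v).card + 1) * (SV hT A v).card
      ≤ ((SV hT A v).card + 1) * (SS hT A).card + 3 * (∑ s ∈ SV hT A v, s.card) := by
  intro N
  induction N with
  | zero =>
    intro A v hcard hA hv
    exact absurd (Finset.card_pos.2 ⟨v, hv⟩) (by omega)
  | succ N ih =>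
    intro A v hcard hA hv
    by_cases hsmall : A.card ≤ 1
    · -- A = {v}
      have : A = {v} := by
        have h1 : A.card = 1 := le_antisymm hsmall (Finset.card_pos.2 ⟨v, hv⟩)
        obtain ⟨w, hw⟩ := Finset.card_eq_one.1 h1
        subst hw
        rw [Finset.mem_singleton] at hv
        subst hv; rfl
      subst this
      rw [SS_singleton, SV_singleton]
      simp
    · -- pick a neighbour u of v inside A
      push_neg at hsmall
      obtain ⟨y, hy, hyv⟩ := Finset.exists_mem_ne hsmall v
      have hvy : v ≠ y := fun h => hyv h.symm
      have hnn : ¬(pth hT v y).Nil := SimpleGraph.Walk.not_nil_of_ne hvy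
      set u := (pth hT v y).getVert 1 with hu_def
      have hadj : G.Adj v u := SimpleGraph.Walk.adj_snd hnn
      have humem : u ∈ P hT v y := by
        rw [mem_P]
        rw [SimpleGraph.Walk.mem_support_iff_exists_getVert]
        refine ⟨1, rfl, ?_⟩
        rw [SimpleGraph.Walk.not_nil_iff_lt_length] at hnn
        omega
      have hu : u ∈ A := hA.2 v hv y hy humem
      -- the two sides
      set b1 := B1 hT A v u with hb1
      set b2 := B2 hT A v u with hb2
      have hvb1 : v ∈ b1 := v_mem_B1 hadj hv
      have hub2 : u ∈ b2 := u_mem_B2 hu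
      have hd : Disjoint b1 b2 := B1_disj_B2
      have hb1A : b1 ⊆ A := Finset.filter_subset _ _
      have hb2A : b2 ⊆ A := Finset.filter_subset _ _
      have hgood1 : good hT b1 := good_B1 hadj hA hv
      have hgood2 : good hT b2 := good_B2 hA hu
      have hcard1 : b1.card ≤ N := by
        have : b1 ⊂ A := Finset.ssubset_iff_of_subset hb1A |>.2
          ⟨u, hu, fun hc => Finset.disjoint_left.1 hd hc hub2⟩
        have := Finset.card_lt_card this
        omega
      have hcard2 : b2.card ≤ N := by
        have : b2 ⊂ A := Finset.ssubset_iff_of_subset hb2A |>.2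
          ⟨v, hv, fun hc => Finset.disjoint_left.1 hd hvb1 hc⟩
        have := Finset.card_lt_card this
        omega
      obtain ⟨C1, B1', F1⟩ := ih b1 v hcard1 hgood1 hvb1
      obtain ⟨C2, B2', F2⟩ := ih b2 u hcard2 hgood2 hub2
      -- identities
      have en : (SS hT A).card
          = (SS hT b1).card + (SS hT b2).card + (SV hT b1 v).card * (SV hT b2 u).card := by
        rw [SS_split hadj hA hv hu, Finset.card_union_of_disjoint (SS_split_disj2 hadj hA hv hu),
          Finset.card_union_of_disjoint (SS_split_disj1 hadj hA hv hu),
          XX_card hadj hA hv hu]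
      have er : (∑ s ∈ SS hT A, s.card)
          = (∑ s ∈ SS hT b1, s.card) + (∑ s ∈ SS hT b2, s.card)
            + ((∑ s ∈ SV hT b1 v, s.card) * (SV hT b2 u).card
              + (SV hT b1 v).card * (∑ s ∈ SV hT b2 u, s.card)) := by
        rw [SS_split hadj hA hv hu, Finset.sum_union (SS_split_disj2 hadj hA hv hu),
          Finset.sum_union (SS_split_disj1 hadj hA hv hu),
          XX_sum_card hadj hA hv hu]
      have ea : (SV hT A v).card
          = (SV hT b1 v).card + (SV hT b1 v).card * (SV hT b2 u).card := by
        rw [SV_split hadj hA hv hu, Finset.card_union_of_disjoint (SV_split_disj hadj hA hv hu),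
          XX_card hadj hA hv hu]
      have ep : (∑ s ∈ SV hT A v, s.card)
          = (∑ s ∈ SV hT b1 v, s.card)
            + ((∑ s ∈ SV hT b1 v, s.card) * (SV hT b2 u).card
              + (SV hT b1 v).card * (∑ s ∈ SV hT b2 u, s.card)) := by
        rw [SV_split hadj hA hv hu, Finset.sum_union (SV_split_disj hadj hA hv hu),
          XX_sum_card hadj hA hv hu]
      -- small facts
      have ha1 : 1 ≤ (SV hT b1 v).card := Finset.card_pos.2 ⟨{v}, singleton_mem_SV hvb1⟩
      have ha2 : 1 ≤ (SV hT b2 u).card := Finset.card_pos.2 ⟨{u}, singleton_mem_SV hub2⟩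
      have hn1 : (SV hT b1 v).card ≤ (SS hT b1).card := Finset.card_le_card SV_subset_SS
      have hn2 : (SV hT b2 u).card ≤ (SS hT b2).card := Finset.card_le_card SV_subset_SS
      -- arithmetic
      have key := arith_main ((SS hT b1).card : ℤ) ((SS hT b2).card : ℤ)
        ((∑ s ∈ SS hT b1, s.card : ℕ) : ℤ) ((∑ s ∈ SS hT b2, s.card : ℕ) : ℤ)
        ((SV hT b1 v).card : ℤ) ((SV hT b2 u).card : ℤ)
        ((∑ s ∈ SV hT b1 v, s.card : ℕ) : ℤ) ((∑ s ∈ SV hT b2 u, s.card : ℕ) : ℤ)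
        (by exact_mod_cast C1) (by exact_mod_cast C2)
        (by exact_mod_cast B1') (by exact_mod_cast B2')
        (by exact_mod_cast F1) (by exact_mod_cast F2)
        (by exact_mod_cast ha1) (by exact_mod_cast ha2)
        (by exact_mod_cast hn1) (by exact_mod_cast hn2)
      obtain ⟨k1, k2, k3⟩ := key
      refine ⟨?_, ?_, ?_⟩
      · rw [en, ea]; exact_mod_cast k1
      · rw [en, ea, ep]; exact_mod_cast k2
      · rw [en, ea, ep, er]; exact_mod_cast k3

end SubtreeProof

namespace SubtreeProof
variable [DecidableEq V] {G : SimpleGraph V} [Fintype V]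

open Classical in
lemma SS_univ (hT : G.IsTree) :
    Finset.univ.filter (fun s : Finset V => IsSubtree G s) = SS hT Finset.univ := by
  ext s
  rw [mem_SS, Finset.mem_filter]
  simp [isSubtree_iff_good hT]

open Classical in
lemma SV_univ (hT : G.IsTree) (v : V) :
    Finset.univ.filter (fun s : Finset V => IsSubtree G s ∧ v ∈ s) = SV hT Finset.univ v := by
  ext s
  rw [mem_SV, Finset.mem_filter]
  simp [isSubtree_iff_good hT, and_assoc]

end SubtreeProof


/-- for any tree `T` and vertex `v`,
`N_v N_T − N_v² + N_T − N_v ≥ 3(R_T − R_v)`. -/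
theorem NN_sub_sq_ge_three_mul_R_sub_R
    [Fintype V] (G : SimpleGraph V) (hT : G.IsTree) (v : V) :
    (numSubtreesAt G v : ℤ) * numSubtrees G - (numSubtreesAt G v : ℤ) ^ 2
        + numSubtrees G - numSubtreesAt G v ≥
      3 * ((sumSubtrees G : ℤ) - sumSubtreesAt G v) := by
  classical
  have hne : Nonempty V := hT.isConnected.nonempty
  have hgood : SubtreeProof.good hT (Finset.univ : Finset V) :=
    ⟨Finset.univ_nonempty, fun x _ y _ => fun z _ => Finset.mem_univ z⟩
  obtain ⟨-, -, F⟩ := SubtreeProof.master hT (Finset.univ : Finset V).card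
    Finset.univ v (le_refl _) hgood (Finset.mem_univ v)
  have e1 : numSubtrees G = (SubtreeProof.SS hT Finset.univ).card := by
    rw [numSubtrees, SubtreeProof.SS_univ hT]
  have e2 : numSubtreesAt G v = (SubtreeProof.SV hT Finset.univ v).card := by
    rw [numSubtreesAt, SubtreeProof.SV_univ hT v]
  have e3 : sumSubtrees G = ∑ s ∈ SubtreeProof.SS hT Finset.univ, s.card := by
    rw [sumSubtrees, SubtreeProof.SS_univ hT]
  have e4 : sumSubtreesAt G v = ∑ s ∈ SubtreeProof.SV hT Finset.univ v, s.card := by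
    rw [sumSubtreesAt, SubtreeProof.SV_univ hT v]
  rw [e1, e2, e3, e4]
  have F' : (3 : ℤ) * (∑ s ∈ SubtreeProof.SS hT Finset.univ, s.card)
      + ((SubtreeProof.SV hT Finset.univ v).card + 1) * (SubtreeProof.SV hT Finset.univ v).card
      ≤ ((SubtreeProof.SV hT Finset.univ v).card + 1) * (SubtreeProof.SS hT Finset.univ).card
        + 3 * (∑ s ∈ SubtreeProof.SV hT Finset.univ v, s.card) := by
    exact_mod_cast F
  push_cast
  nlinarith [F']
end

section
/- Let T be a finite tree rooted at a vertex v with deg(v) ≥ 2, such that the rooted tree (T, v) is neither P_{2,2} nor P_{2,3}. Then N_v² + N_v ≥ 3 R_v. -/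
variable {V : Type*}

/-- The rooted tree `(G, v)` is `P_{2,2}`: the star on 3 vertices rooted at its center. -/
def IsP22 [Fintype V] [DecidableEq V] (G : SimpleGraph V) [DecidableRel G.Adj] (v : V) : Prop :=
  Fintype.card V = 3 ∧ G.degree v = 2

/-- The rooted tree `(G, v)` is `P_{2,3}`: the path on 4 vertices rooted at an
internal vertex. -/
def IsP23 [Fintype V] [DecidableEq V] (G : SimpleGraph V) [DecidableRel G.Adj] (v : V) : Prop :=
  Fintype.card V = 4 ∧ G.degree v = 2 ∧ ∀ w : V, G.degree w ≤ 2


section AuxSubtreeLemmas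
open SimpleGraph Finset
variable {G : SimpleGraph V}



lemma reach_induce_of_walk {s : Set V} : ∀ {a b : V} (p : G.Walk a b)
    (_ : ∀ x ∈ p.support, x ∈ s) (ha : a ∈ s) (hb : b ∈ s),
    (G.induce s).Reachable ⟨a, ha⟩ ⟨b, hb⟩ := by
  intro a b p
  induction p with
  | nil => intro _ _ _; rfl
  | @cons u c d h q ih =>
      intro hps ha hb
      have hc : c ∈ s := hps c (by simp)
      have hadj : (G.induce s).Adj ⟨u, ha⟩ ⟨c, hc⟩ := h
      exact (hadj.reachable).trans
        (ih (fun x hx => hps x (by simp [hx])) hc hb)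

/-- If every element of `s` is connected to `r` by a walk inside `s`, the induced graph
is connected. -/
lemma induce_connected_of_walks {s : Set V} {r : V} (hr : r ∈ s)
    (h : ∀ u (hu : u ∈ s), ∃ p : G.Walk r u, ∀ x ∈ p.support, x ∈ s) :
    (G.induce s).Connected := by
  rw [SimpleGraph.connected_iff]
  refine ⟨fun a b => ?_, ⟨⟨r, hr⟩⟩⟩
  obtain ⟨p, hp⟩ := h a.1 a.2
  obtain ⟨q, hq⟩ := h b.1 b.2
  have h1 := reach_induce_of_walk p hp hr a.2
  have h2 := reach_induce_of_walk q hq hr b.2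
  exact h1.symm.trans h2

/-- From connectivity of the induced graph, get a walk in `G` with support in `s`. -/
lemma exists_walk_of_induce_connected {s : Set V} (hc : (G.induce s).Connected)
    {a b : V} (ha : a ∈ s) (hb : b ∈ s) :
    ∃ p : G.Walk a b, ∀ x ∈ p.support, x ∈ s := by
  obtain ⟨q⟩ := hc.preconnected ⟨a, ha⟩ ⟨b, hb⟩
  refine ⟨q.map (SimpleGraph.Embedding.induce s).toHom, ?_⟩
  intro x hx
  change x ∈ (q.map (SimpleGraph.Embedding.induce s).toHom).support at hx
  rw [SimpleGraph.Walk.support_map] at hx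
  obtain ⟨y, _, rfl⟩ := List.mem_map.mp hx
  exact y.2


/-- The unique path between two vertices of a tree, as a walk. -/
noncomputable def tp (hT : G.IsTree) (a b : V) : G.Walk a b :=
  (hT.existsUnique_path a b).choose

lemma tp_isPath (hT : G.IsTree) (a b : V) : (tp hT a b).IsPath :=
  (hT.existsUnique_path a b).choose_spec.1

lemma tp_eq (hT : G.IsTree) {a b : V} (p : G.Walk a b) (hp : p.IsPath) :
    p = tp hT a b :=
  (hT.existsUnique_path a b).choose_spec.2 p hp

lemma tp_self (hT : G.IsTree) (a : V) : tp hT a a = Walk.nil :=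
  (tp_eq hT Walk.nil (Walk.IsPath.nil)).symm

lemma tp_takeUntil [DecidableEq V] (hT : G.IsTree) {a b x : V}
    (hx : x ∈ (tp hT a b).support) :
    (tp hT a b).takeUntil x hx = tp hT a x :=
  tp_eq hT _ ((tp_isPath hT a b).takeUntil hx)

lemma tp_support_takeUntil [DecidableEq V] (hT : G.IsTree) {a b x : V}
    (hx : x ∈ (tp hT a b).support) :
    ∀ y ∈ (tp hT a x).support, y ∈ (tp hT a b).support := by
  intro y hy
  rw [← tp_takeUntil hT hx] at hy
  exact Walk.support_takeUntil_subset _ hx hy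

/-- On the unique tree path from `a` to `b`, a vertex with the same path-length must be `b`. -/
lemma tp_eq_of_supp_eq [DecidableEq V] (hT : G.IsTree) {a b c : V}
    (hb : b ∈ (tp hT a c).support) (hc : c ∈ (tp hT a b).support) : b = c := by
  have h1 : (tp hT a c).takeUntil b hb = tp hT a b := tp_takeUntil hT hb
  have h2 : (tp hT a b).takeUntil c hc = tp hT a c := tp_takeUntil hT hc
  have l1 : ((tp hT a c).takeUntil b hb).length + ((tp hT a c).dropUntil b hb).length
      = (tp hT a c).length := by
    conv_rhs => rw [← (tp hT a c).take_spec hb]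
    rw [Walk.length_append]
  have l2 : ((tp hT a b).takeUntil c hc).length + ((tp hT a b).dropUntil c hc).length
      = (tp hT a b).length := by
    conv_rhs => rw [← (tp hT a b).take_spec hc]
    rw [Walk.length_append]
  rw [h1] at l1
  rw [h2] at l2
  have : ((tp hT a c).dropUntil b hb).length = 0 := by omega
  have hdrop := (tp hT a c).dropUntil b hb
  revert this
  generalize (tp hT a c).dropUntil b hb = d
  intro hd
  cases d with
  | nil => rfl
  | cons h q => simp at hd

/-- Connected induced subgraph on a finset contains all tree paths between its members. -/
lemma subtree_mem_tp (hT : G.IsTree) {s : Finset V}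
    (hc : (G.induce (s : Set V)).Connected) {a b : V} (ha : a ∈ s) (hb : b ∈ s) :
    ∀ x ∈ (tp hT a b).support, x ∈ s := by
  classical
  obtain ⟨p, hp⟩ := exists_walk_of_induce_connected hc (by exact_mod_cast ha) (by exact_mod_cast hb)
  have : (p.toPath : G.Walk a b) = tp hT a b := tp_eq hT _ p.toPath.2
  intro x hx
  rw [← this] at hx
  have := Walk.support_toPath_subset p hx
  exact_mod_cast hp x this

open Classical in
lemma card_le_numSubtrees [Fintype V] [DecidableEq V] (hT : G.IsTree) (r : V) (C : Finset V)
    (hr : r ∈ C) (hC : ∀ u ∈ C, ∀ x ∈ (tp hT r u).support, x ∈ C) :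
    C.card ≤ (univ.filter fun s : Finset V => IsSubtree G s ∧ r ∈ s ∧ s ⊆ C).card := by
  classical
  apply Finset.card_le_card_of_injOn (fun u => (tp hT r u).support.toFinset)
  · intro u hu
    simp only [Finset.mem_coe, mem_filter, mem_univ, true_and]
    refine ⟨⟨⟨r, by simp [Walk.start_mem_support]⟩, ?_⟩,
      by simp [Walk.start_mem_support], ?_⟩
    · apply induce_connected_of_walks (r := r) (by simp [Walk.start_mem_support])
      intro x hx
      simp only [coe_sort_coe, List.coe_toFinset, Set.mem_setOf_eq] at hx
      refine ⟨tp hT r x, fun y hy => ?_⟩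
      simp only [coe_sort_coe, List.coe_toFinset, Set.mem_setOf_eq]
      exact tp_support_takeUntil hT hx y hy
    · intro x hx
      simp only [List.mem_toFinset] at hx
      exact hC u hu x hx
  · intro u1 h1 u2 h2 heq
    simp only at heq
    have m1 : u2 ∈ (tp hT r u1).support := by
      have : u2 ∈ (tp hT r u2).support.toFinset := by
        simp [Walk.end_mem_support]
      rw [← heq] at this; simpa using this
    have m2 : u1 ∈ (tp hT r u2).support := by
      have : u1 ∈ (tp hT r u1).support.toFinset := by
        simp [Walk.end_mem_support]
      rw [heq] at this; simpa using this
    exact tp_eq_of_supp_eq hT m2 m1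

open Classical in
lemma two_sum_card_le [Fintype V] [DecidableEq V] (hT : G.IsTree) (r : V) (C : Finset V) :
    2 * (∑ s ∈ univ.filter (fun s : Finset V => IsSubtree G s ∧ r ∈ s ∧ s ⊆ C), s.card)
      ≤ (univ.filter fun s : Finset V => IsSubtree G s ∧ r ∈ s ∧ s ⊆ C).card ^ 2
        + (univ.filter fun s : Finset V => IsSubtree G s ∧ r ∈ s ∧ s ⊆ C).card := by
  classical
  set F := univ.filter (fun s : Finset V => IsSubtree G s ∧ r ∈ s ∧ s ⊆ C) with hF
  have step1 : ∀ s ∈ F, s.card ≤ (F.filter (fun a => a ⊆ s)).card := by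
    intro s hs
    simp only [hF, mem_filter, mem_univ, true_and] at hs
    obtain ⟨⟨hne, hconn⟩, hrs, hsC⟩ := hs
    have h1 : s.card ≤ (univ.filter fun a : Finset V => IsSubtree G a ∧ r ∈ a ∧ a ⊆ s).card :=
      card_le_numSubtrees hT r s hrs (fun u hu => subtree_mem_tp hT hconn hrs hu)
    refine h1.trans (Finset.card_le_card ?_)
    intro a ha
    simp only [mem_filter, mem_univ, true_and, hF] at ha ⊢
    exact ⟨⟨ha.1, ha.2.1, ha.2.2.trans hsC⟩, ha.2.2⟩
  have h2 : 2 * (∑ s ∈ F, s.card) ≤ 2 * ∑ s ∈ F, (F.filter (fun a => a ⊆ s)).card := by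
    gcongr with s hs
    exact step1 s hs
  refine h2.trans ?_
  have key : ∀ s ∈ F, (F.filter (fun a => a ⊆ s)).card
      = ∑ a ∈ F, (if a ⊆ s then 1 else 0) := by
    intro s _; rw [Finset.card_filter]
  calc 2 * ∑ s ∈ F, (F.filter (fun a => a ⊆ s)).card
      = ∑ s ∈ F, ∑ a ∈ F, ((if a ⊆ s then 1 else 0) + (if s ⊆ a then 1 else 0)) := by
        rw [Finset.sum_congr rfl key, two_mul]
        nth_rewrite 2 [Finset.sum_comm]
        rw [← Finset.sum_add_distrib]
        exact Finset.sum_congr rfl fun s _ => (Finset.sum_add_distrib).symm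
    _ ≤ ∑ s ∈ F, ∑ a ∈ F, (1 + (if a = s then 1 else 0)) := by
        refine Finset.sum_le_sum (fun s _ => Finset.sum_le_sum (fun a _ => ?_))
        by_cases h1 : a ⊆ s <;> by_cases h2 : s ⊆ a
        · simp [h1, h2, Finset.Subset.antisymm h1 h2]
        · simp [h1, h2]
        · simp [h1, h2]
        · simp [h1, h2]
    _ = F.card ^ 2 + F.card := by
        have hinner : ∀ s ∈ F, (∑ a ∈ F, (1 + (if a = s then 1 else 0))) = F.card + 1 := by
          intro s hs
          rw [Finset.sum_add_distrib, Finset.sum_const,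
            Finset.sum_ite_eq' F s (fun _ => 1), if_pos hs]
          simp
        rw [Finset.sum_congr rfl hinner, Finset.sum_const, smul_eq_mul, sq]
        ring

section Branch

variable [Fintype V] [DecidableEq V] (hT : G.IsTree) (v w : V)

/-- The branch of `w` when the tree is rooted at `v`: vertices whose tree path from `w`
avoids `v`. -/
noncomputable def brnch : Finset V :=
  univ.filter (fun u => u ≠ v ∧ v ∉ (tp hT w u).support)

variable {hT} {v w}

lemma mem_brnch {u : V} : u ∈ brnch hT v w ↔ u ≠ v ∧ v ∉ (tp hT w u).support := by
  classical
  simp [brnch]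

lemma w_mem_brnch (hvw : w ≠ v) : w ∈ brnch hT v w := by
  rw [mem_brnch]
  refine ⟨hvw, ?_⟩
  rw [tp_self hT w]
  simp [Walk.support_nil]
  exact fun h => hvw h.symm

lemma v_not_mem_brnch : v ∉ brnch hT v w := by
  rw [mem_brnch]; tauto

lemma brnch_path_closed {u : V} (hu : u ∈ brnch hT v w) :
    ∀ x ∈ (tp hT w u).support, x ∈ brnch hT v w := by
  intro x hx
  rw [mem_brnch] at hu ⊢
  constructor
  · rintro rfl; exact hu.2 hx
  · intro hv
    exact hu.2 (tp_support_takeUntil hT hx v hv)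

lemma brnch_adj_closed {a b : V} (ha : a ∈ brnch hT v w) (hab : G.Adj a b)
    (hb : b ≠ v) : b ∈ brnch hT v w := by
  rw [mem_brnch] at ha ⊢
  refine ⟨hb, ?_⟩
  by_cases hmem : b ∈ (tp hT w a).support
  · intro hv
    exact ha.2 (tp_support_takeUntil hT hmem v hv)
  · have hpath : ((tp hT w a).concat hab).IsPath := by
      rw [Walk.isPath_def, Walk.support_concat, List.nodup_append]
      simp [(tp_isPath hT w a).support_nodup, hmem]
      exact fun x hx hxb => hmem (hxb ▸ hx)
    have heq : (tp hT w a).concat hab = tp hT w b := tp_eq hT _ hpath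
    rw [← heq, Walk.support_concat]
    simp only [List.mem_append, List.mem_singleton]
    rintro (hv | rfl)
    · exact ha.2 hv
    · exact hb rfl

/-- For `u` in the branch, the tree path from the root `v` starts with the edge `v w`. -/
lemma tp_from_root (hw : G.Adj v w) {u : V} (hu : u ∈ brnch hT v w) :
    tp hT v u = Walk.cons hw (tp hT w u) := by
  rw [mem_brnch] at hu
  exact (tp_eq hT _ ((Walk.cons_isPath_iff hw _).2 ⟨tp_isPath hT w u, hu.2⟩)).symm

/-- The unique neighbor of `v` in the branch is `w`. -/
lemma brnch_adj_root (hw : G.Adj v w) {a : V} (ha : a ∈ brnch hT v w)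
    (hva : G.Adj v a) : a = w := by
  have h1 : tp hT v a = Walk.cons hw (tp hT w a) := tp_from_root hw ha
  have h2 : tp hT v a = hva.toWalk := by
    refine (tp_eq hT _ ?_).symm
    simp [SimpleGraph.Adj.toWalk, Walk.cons_isPath_iff, hva.ne]
  have hlen : (tp hT w a).length = 0 := by
    have := congrArg Walk.length (h1.symm.trans h2)
    simp only [SimpleGraph.Adj.toWalk, Walk.length_cons, Walk.length_nil] at this
    omega
  have := tp hT w a
  revert hlen
  generalize tp hT w a = q
  intro hq
  cases q with
  | nil => rfl
  | cons h p => simp at hq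

/-- Complement of the branch is closed under tree paths from the root. -/
lemma compl_path_closed {u : V} (hu : u ∉ brnch hT v w) :
    ∀ x ∈ (tp hT v u).support, x ∉ brnch hT v w := by
  intro x hx hxb
  by_cases huv : u = v
  · rw [huv, tp_self hT v] at hx
    simp [Walk.support_nil] at hx
    subst hx
    exact v_not_mem_brnch hxb
  -- build a walk from w to u avoiding v
  apply hu
  rw [mem_brnch] at hxb ⊢
  refine ⟨huv, ?_⟩
  have hvx : v ≠ x := fun h => hxb.1 h.symm
  set d := (tp hT v u).dropUntil x hx with hd
  have hvd : v ∉ d.support := by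
    intro hvmem
    have hsplit : (tp hT v u).support
        = ((tp hT v u).takeUntil x hx).support ++ d.support.tail := by
      conv_lhs => rw [← (tp hT v u).take_spec hx]
      rw [Walk.support_append]
    have hnd := (tp_isPath hT v u).support_nodup
    rw [hsplit] at hnd
    have hdisj := List.disjoint_of_nodup_append hnd
    have hv1 : v ∈ ((tp hT v u).takeUntil x hx).support := Walk.start_mem_support _
    have hv2 : v ∈ d.support.tail := by
      rw [Walk.support_eq_cons d] at hvmem
      rcases List.mem_cons.mp hvmem with h | h
      · exact absurd h hvx
      · exact h
    exact hdisj hv1 hv2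
  have key : ∀ y ∈ ((tp hT w x).append d).support, y ≠ v := by
    intro y hy
    rw [Walk.support_append] at hy
    rcases List.mem_append.mp hy with h | h
    · intro hyv; subst hyv; exact hxb.2 h
    · intro hyv; subst hyv; exact hvd (List.mem_of_mem_tail h)
  have heq : (((tp hT w x).append d).toPath : G.Walk w u) = tp hT w u :=
    tp_eq hT _ (((tp hT w x).append d).toPath.2
      )
  intro hvmem
  rw [← heq] at hvmem
  have := Walk.support_toPath_subset _ hvmem
  exact key v this rfl

end Branch

section Helpers
variable {G : SimpleGraph V}

lemma isSubtree_of_walks {s : Finset V} {r : V} (hr : r ∈ s)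
    (h : ∀ u ∈ s, ∃ p : G.Walk r u, ∀ x ∈ p.support, x ∈ s) : IsSubtree G s := by
  refine ⟨⟨r, hr⟩, ?_⟩
  apply induce_connected_of_walks (r := r) (by exact_mod_cast hr)
  intro u hu
  obtain ⟨p, hp⟩ := h u (by exact_mod_cast hu)
  exact ⟨p, fun x hx => by exact_mod_cast hp x hx⟩

lemma isSubtree_singleton (x : V) : IsSubtree G {x} := by
  classical
  apply isSubtree_of_walks (r := x) (by simp)
  intro u hu
  rw [Finset.mem_singleton] at hu
  subst hu
  exact ⟨Walk.nil, by simp⟩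

lemma isSubtree_pair [DecidableEq V] {x y : V} (h : G.Adj x y) : IsSubtree G ({x, y} : Finset V) := by
  have : x ∈ ({x,y}:Finset V) := by simp
  apply isSubtree_of_walks (r := x) (by simp)
  intro u hu
  rw [Finset.mem_insert, Finset.mem_singleton] at hu
  rcases hu with rfl | rfl
  · exact ⟨Walk.nil, by simp⟩
  · exact ⟨h.toWalk, by simp [SimpleGraph.Adj.toWalk]⟩

lemma deg_le_of_nbhd_subset [Fintype V] [DecidableEq V] [DecidableRel G.Adj] {z : V}
    {t : Finset V} (h : ∀ a, G.Adj z a → a ∈ t) : G.degree z ≤ t.card := by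
  rw [← SimpleGraph.card_neighborFinset_eq_degree]
  exact Finset.card_le_card (fun a ha => h a ((G.mem_neighborFinset z a).mp ha))

lemma classify_pair_subsets [DecidableEq V] {s : Finset V} {x y : V} (hx : x ∈ s)
    (hs : s ⊆ {x, y}) : s = {x} ∨ s = {x, y} := by
  by_cases hy : y ∈ s
  · right
    refine Finset.Subset.antisymm hs ?_
    intro a ha
    rcases Finset.mem_insert.mp ha with rfl | ha
    · exact hx
    · rwa [Finset.mem_singleton.mp ha]
  · left
    refine Finset.Subset.antisymm ?_ (by simpa using hx)
    intro a ha
    rcases Finset.mem_insert.mp (hs ha) with rfl | h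
    · exact Finset.mem_singleton_self a
    · rw [Finset.mem_singleton.mp h] at ha; exact absurd ha hy

end Helpers

open Classical in
lemma branch_decomp [Fintype V] [DecidableEq V] {G : SimpleGraph V} (hT : G.IsTree)
    {v w : V} (hw : G.Adj v w) (f : Finset V → ℕ) :
    ∑ s ∈ univ.filter (fun s : Finset V => IsSubtree G s ∧ v ∈ s), f s
    = ∑ p ∈ (univ.filter (fun s : Finset V => IsSubtree G s ∧ v ∈ s ∧ s ⊆ (brnch hT v w)ᶜ)) ×ˢ
        (insert ∅ (univ.filter (fun s : Finset V => IsSubtree G s ∧ w ∈ s ∧ s ⊆ brnch hT v w))),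
        f (p.1 ∪ p.2) := by
  classical
  set A := brnch hT v w with hA
  have hwA : w ∈ A := w_mem_brnch hw.ne'
  apply Finset.sum_nbij' (i := fun s => (s ∩ Aᶜ, s ∩ A)) (j := fun p => p.1 ∪ p.2)
  · -- hi
    intro s hs
    simp only [mem_filter, mem_univ, true_and] at hs
    obtain ⟨⟨hne, hconn⟩, hvs⟩ := hs
    have hpaths := fun (a b : V) (ha : a ∈ s) (hb : b ∈ s) => subtree_mem_tp hT hconn ha hb
    rw [Finset.mem_product]
    constructor
    · simp only [mem_filter, mem_univ, true_and]
      have hvB : v ∈ s ∩ Aᶜ := by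
        rw [mem_inter, mem_compl]; exact ⟨hvs, v_not_mem_brnch⟩
      refine ⟨isSubtree_of_walks hvB ?_, hvB, inter_subset_right⟩
      intro u hu
      rw [mem_inter, mem_compl] at hu
      exact ⟨tp hT v u, fun x hx => mem_inter.mpr ⟨hpaths v u hvs hu.1 x hx,
        mem_compl.mpr (compl_path_closed hu.2 x hx)⟩⟩
    · by_cases hemp : s ∩ A = ∅
      · simp [hemp]
      · rw [mem_insert]; right
        obtain ⟨u, hu⟩ := Finset.nonempty_iff_ne_empty.mpr hemp
        rw [mem_inter] at hu
        have hws : w ∈ s := by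
          have heq := tp_from_root hw hu.2
          have hwsup : w ∈ (tp hT v u).support := by
            rw [heq, Walk.support_cons]
            exact List.mem_cons_of_mem _ (Walk.start_mem_support _)
          exact hpaths v u hvs hu.1 w hwsup
        simp only [mem_filter, mem_univ, true_and]
        have hwmem : w ∈ s ∩ A := mem_inter.mpr ⟨hws, hwA⟩
        refine ⟨isSubtree_of_walks hwmem ?_, hwmem, inter_subset_right⟩
        intro u' hu'
        rw [mem_inter] at hu'
        exact ⟨tp hT w u', fun x hx => mem_inter.mpr ⟨hpaths w u' hws hu'.1 x hx,
          brnch_path_closed hu'.2 x hx⟩⟩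
  · -- hj
    intro p hp
    rw [Finset.mem_product] at hp
    obtain ⟨hb, ha⟩ := hp
    simp only [mem_filter, mem_univ, true_and] at hb
    obtain ⟨⟨hbne, hbconn⟩, hvb, hbsub⟩ := hb
    have hvmem : v ∈ p.1 ∪ p.2 := mem_union_left _ hvb
    simp only [mem_filter, mem_univ, true_and]
    refine ⟨isSubtree_of_walks hvmem ?_, hvmem⟩
    intro u hu
    rcases mem_union.mp hu with h | h
    · exact ⟨tp hT v u, fun x hx => mem_union_left _ (subtree_mem_tp hT hbconn hvb h x hx)⟩
    · rcases mem_insert.mp ha with hep | hsa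
      · rw [hep] at h; simp at h
      · simp only [mem_filter, mem_univ, true_and] at hsa
        obtain ⟨⟨_, haconn⟩, hwa, hasub⟩ := hsa
        refine ⟨tp hT v u, fun x hx => ?_⟩
        have huA : u ∈ A := hasub h
        rw [tp_from_root hw huA, Walk.support_cons] at hx
        rcases List.mem_cons.mp hx with rfl | hx'
        · exact mem_union_left _ hvb
        · exact mem_union_right _ (subtree_mem_tp hT haconn hwa h x hx')
  · -- left inverse
    intro s _
    simp only
    rw [← Finset.inter_union_distrib_left, Finset.union_comm, Finset.union_compl,
      Finset.inter_univ]
  · -- right inverse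
    intro p hp
    rw [Finset.mem_product] at hp
    obtain ⟨hb, ha⟩ := hp
    simp only [mem_filter, mem_univ, true_and] at hb
    have hbsub : p.1 ⊆ Aᶜ := hb.2.2
    have hasub : p.2 ⊆ A := by
      rcases mem_insert.mp ha with hep | hsa
      · rw [hep]; exact Finset.empty_subset _
      · simp only [mem_filter, mem_univ, true_and] at hsa
        exact hsa.2.2
    have h1 : (p.1 ∪ p.2) ∩ Aᶜ = p.1 := by
      rw [Finset.union_inter_distrib_right, Finset.inter_eq_left.mpr hbsub]
      have : p.2 ∩ Aᶜ = ∅ := by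
        rw [Finset.eq_empty_iff_forall_notMem]
        intro x hx
        rw [mem_inter, mem_compl] at hx
        exact hx.2 (hasub hx.1)
      rw [this, Finset.union_empty]
    have h2 : (p.1 ∪ p.2) ∩ A = p.2 := by
      rw [Finset.union_inter_distrib_right, Finset.inter_eq_left.mpr hasub]
      have : p.1 ∩ A = ∅ := by
        rw [Finset.eq_empty_iff_forall_notMem]
        intro x hx
        rw [mem_inter] at hx
        exact (mem_compl.mp (hbsub hx.1)) hx.2
      rw [this, Finset.empty_union]
    exact Prod.ext h1 h2
  · -- f compatibility
    intro s _
    simp only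
    rw [← Finset.inter_union_distrib_left, Finset.union_comm, Finset.union_compl,
      Finset.inter_univ]

end AuxSubtreeLemmas

open SimpleGraph Finset in
set_option maxHeartbeats 2000000 in
theorem Nv_sq_add_Nv_ge_three_Rv'
    [Fintype V] [DecidableEq V] (G : SimpleGraph V) [DecidableRel G.Adj]
    (hT : G.IsTree) (v : V) (hdeg : 2 ≤ G.degree v)
    (h22 : ¬ (Fintype.card V = 3 ∧ G.degree v = 2))
    (h23 : ¬ (Fintype.card V = 4 ∧ G.degree v = 2 ∧ ∀ z : V, G.degree z ≤ 2)) :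
    numSubtreesAt G v ^ 2 + numSubtreesAt G v ≥ 3 * sumSubtreesAt G v := by
  classical
  have hdeg2 : 1 < (G.neighborFinset v).card := by
    rw [SimpleGraph.card_neighborFinset_eq_degree]; omega
  obtain ⟨w, hwm, u2, hu2m, hwu2⟩ := Finset.one_lt_card.mp hdeg2
  rw [G.mem_neighborFinset] at hwm hu2m
  have hw : G.Adj v w := hwm
  have hu2 : G.Adj v u2 := hu2m
  set A := brnch hT v w with hA
  have hwA : w ∈ A := w_mem_brnch hw.ne'
  have hvA : v ∉ A := v_not_mem_brnch
  have hu2A : u2 ∉ A := fun h => hwu2 (brnch_adj_root hw h hu2).symm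
  have hu2v : u2 ≠ v := hu2.ne'
  set FB := univ.filter (fun s : Finset V => IsSubtree G s ∧ v ∈ s ∧ s ⊆ Aᶜ) with hFB
  set FA := univ.filter (fun s : Finset V => IsSubtree G s ∧ w ∈ s ∧ s ⊆ A) with hFA
  set n := FB.card with hn
  set M := FA.card with hM
  set RB := ∑ s ∈ FB, s.card with hRB
  set SAs := ∑ s ∈ FA, s.card with hSAs
  have hempA : (∅ : Finset V) ∉ FA := by
    rw [hFA]; simp only [mem_filter, mem_univ, true_and]
    rintro ⟨-, h, -⟩; simp at h
  -- the two decomposition identities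
  have hNcard : numSubtreesAt G v = n * (M + 1) := by
    have hnum0 : numSubtreesAt G v
        = (univ.filter fun s : Finset V => IsSubtree G s ∧ v ∈ s).card := by
      unfold numSubtreesAt
      congr 1
      apply Finset.filter_congr_decidable
    rw [hnum0, Finset.card_eq_sum_ones, branch_decomp hT hw (fun _ => 1), ← hFB, ← hFA]
    rw [Finset.sum_const, smul_eq_mul, mul_one, Finset.card_product,
      Finset.card_insert_of_notMem hempA]
  have hRcard : sumSubtreesAt G v = (M + 1) * RB + n * SAs := by
    have hsum0 : sumSubtreesAt G v
        = ∑ s ∈ univ.filter (fun s : Finset V => IsSubtree G s ∧ v ∈ s), s.card := by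
      unfold sumSubtreesAt
      congr 1
      apply Finset.filter_congr_decidable
    rw [hsum0, branch_decomp hT hw (fun s => s.card), ← hFB, ← hFA]
    have hsplit : ∀ p ∈ FB ×ˢ insert ∅ FA, (p.1 ∪ p.2).card = p.1.card + p.2.card := by
      intro p hp
      rw [Finset.mem_product] at hp
      obtain ⟨hb, ha⟩ := hp
      rw [hFB, mem_filter] at hb
      have hasub : p.2 ⊆ A := by
        rcases mem_insert.mp ha with hep | hsa
        · rw [hep]; exact Finset.empty_subset _
        · rw [hFA, mem_filter] at hsa; exact hsa.2.2.2
      apply Finset.card_union_of_disjoint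
      rw [Finset.disjoint_left]
      intro x hx1 hx2
      exact (mem_compl.mp (hb.2.2.2 hx1)) (hasub hx2)
    rw [Finset.sum_congr rfl hsplit, Finset.sum_product]
    have hout : ∀ b ∈ FB, (∑ a ∈ insert ∅ FA, ((b, a).1.card + (b, a).2.card))
        = (M + 1) * b.card + SAs := by
      intro b _
      simp only
      rw [Finset.sum_add_distrib, Finset.sum_const, Finset.card_insert_of_notMem hempA,
        smul_eq_mul, Finset.sum_insert hempA]
      simp [hSAs, hM]
    rw [Finset.sum_congr rfl hout, Finset.sum_add_distrib, ← Finset.mul_sum,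
      Finset.sum_const, smul_eq_mul, ← hRB]
  -- bounds
  have h2RB : 2 * RB ≤ n ^ 2 + n := by
    rw [hRB, hn, hFB]; exact two_sum_card_le hT v Aᶜ
  have h2SA : 2 * SAs ≤ M ^ 2 + M := by
    rw [hSAs, hM, hFA]; exact two_sum_card_le hT w A
  have hcardB : Aᶜ.card ≤ n := by
    rw [hn, hFB]
    exact card_le_numSubtrees hT v Aᶜ (mem_compl.mpr hvA)
      (fun u hu x hx => mem_compl.mpr (compl_path_closed (mem_compl.mp hu) x hx))
  have hcardA : A.card ≤ M := by
    rw [hM, hFA]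
    exact card_le_numSubtrees hT w A hwA (fun u hu => brnch_path_closed hu)
  -- small members
  have hvsing : ({v} : Finset V) ∈ FB := by
    rw [hFB, mem_filter]
    exact ⟨mem_univ _, isSubtree_singleton v, Finset.mem_singleton_self v,
      Finset.singleton_subset_iff.mpr (mem_compl.mpr hvA)⟩
  have hvpairB : ({v, u2} : Finset V) ∈ FB := by
    rw [hFB, mem_filter]
    refine ⟨mem_univ _, isSubtree_pair hu2, by simp, ?_⟩
    intro a ha
    rcases Finset.mem_insert.mp ha with rfl | ha
    · exact mem_compl.mpr hvA
    · rw [Finset.mem_singleton.mp ha]; exact mem_compl.mpr hu2A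
  have hsingne : ({v} : Finset V) ≠ {v, u2} := by
    intro h
    have : u2 ∈ ({v} : Finset V) := by rw [h]; simp
    exact hu2v (Finset.mem_singleton.mp this)
  have hn2 : 2 ≤ n := by
    rw [hn]; exact Finset.one_lt_card.mpr ⟨{v}, hvsing, {v, u2}, hvpairB, hsingne⟩
  have hwsing : ({w} : Finset V) ∈ FA := by
    rw [hFA, mem_filter]
    exact ⟨mem_univ _, isSubtree_singleton w, Finset.mem_singleton_self w,
      Finset.singleton_subset_iff.mpr hwA⟩
  have hM1 : 1 ≤ M := by
    rw [hM]; exact Finset.card_pos.mpr ⟨{w}, hwsing⟩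
  -- exceptional cases
  have hBpair : {v, u2} ⊆ Aᶜ := by
    intro a ha
    rcases Finset.mem_insert.mp ha with rfl | ha
    · exact mem_compl.mpr hvA
    · rw [Finset.mem_singleton.mp ha]; exact mem_compl.mpr hu2A
  have hcardvu2 : ({v, u2} : Finset V).card = 2 := by
    rw [Finset.card_insert_of_notMem (by simp [hu2v]; exact fun h => hu2v h.symm),
      Finset.card_singleton]
  have hAeq_of_M1 : M = 1 → A = {w} := by
    intro hM'
    have hsub : {w} ⊆ A := Finset.singleton_subset_iff.mpr hwA
    exact (Finset.eq_of_subset_of_card_le hsub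
      (by rw [Finset.card_singleton]; omega)).symm
  have hBeq_of_n2 : n = 2 → Aᶜ = {v, u2} := by
    intro hn'
    exact (Finset.eq_of_subset_of_card_le hBpair (by rw [hcardvu2]; omega)).symm
  have hcardnb : ({u2, w} : Finset V).card = 2 := by
    rw [Finset.card_insert_of_notMem
      (by rw [Finset.mem_singleton]; exact fun h => hwu2 h.symm), Finset.card_singleton]
  have hC22 : ¬ (n = 2 ∧ M = 1) := by
    rintro ⟨hn', hM'⟩
    have hAe : A = {w} := hAeq_of_M1 hM'
    have hBe : Aᶜ = {v, u2} := hBeq_of_n2 hn'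
    have hcard3 : Fintype.card V = 3 := by
      rw [← Finset.card_add_card_compl A, hBe, hcardvu2, hAe, Finset.card_singleton]
    have hclassify : ∀ a : V, a = v ∨ a = u2 ∨ a = w := by
      intro a
      by_cases haA : a ∈ A
      · rw [hAe, Finset.mem_singleton] at haA
        exact Or.inr (Or.inr haA)
      · have hmem : a ∈ Aᶜ := mem_compl.mpr haA
        rw [hBe] at hmem
        rcases Finset.mem_insert.mp hmem with h | h
        · exact Or.inl h
        · rw [Finset.mem_singleton] at h
          exact Or.inr (Or.inl h)
    have hnb : G.neighborFinset v = {u2, w} := by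
      ext a
      rw [SimpleGraph.mem_neighborFinset]
      constructor
      · intro hadj
        rcases hclassify a with rfl | rfl | rfl
        · exact absurd hadj (G.irrefl)
        · simp
        · simp
      · intro ha
        rcases Finset.mem_insert.mp ha with rfl | ha
        · exact hu2
        · rw [Finset.mem_singleton.mp ha]; exact hw
    have hdv : G.degree v = 2 := by
      rw [← SimpleGraph.card_neighborFinset_eq_degree, hnb, hcardnb]
    exact h22 ⟨hcard3, hdv⟩
  have hC23a : ¬ (n = 2 ∧ M = 2) := by
    rintro ⟨hn', hM'⟩
    have hBe : Aᶜ = {v, u2} := hBeq_of_n2 hn'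
    obtain ⟨y, hyA, hyw⟩ : ∃ y ∈ A, y ≠ w := by
      by_contra hcon
      push_neg at hcon
      have hsubA : A ⊆ {w} := fun a ha => Finset.mem_singleton.mpr (hcon a ha)
      have hFAsub : FA ⊆ {({w} : Finset V)} := by
        intro s hs
        rw [hFA, mem_filter] at hs
        rw [Finset.mem_singleton]
        exact Finset.Subset.antisymm (hs.2.2.2.trans hsubA)
          (Finset.singleton_subset_iff.mpr hs.2.2.1)
      have hle := Finset.card_le_card hFAsub
      rw [Finset.card_singleton] at hle
      omega
    have hyv : y ≠ v := fun h => hvA (h ▸ hyA)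
    have hyu2 : y ≠ u2 := fun h => hu2A (h ▸ hyA)
    have hwy : w ∉ ({y} : Finset V) := by
      rw [Finset.mem_singleton]; exact fun h => hyw h.symm
    have hAe : A = {w, y} := by
      refine (Finset.eq_of_subset_of_card_le ?_ ?_).symm
      · intro a ha
        rcases Finset.mem_insert.mp ha with rfl | ha
        · exact hwA
        · rw [Finset.mem_singleton.mp ha]; exact hyA
      · rw [Finset.card_insert_of_notMem hwy, Finset.card_singleton]
        omega
    have hcard4 : Fintype.card V = 4 := by
      rw [← Finset.card_add_card_compl A, hBe, hcardvu2, hAe,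
        Finset.card_insert_of_notMem hwy, Finset.card_singleton]
    have hclassify : ∀ a : V, a = v ∨ a = u2 ∨ a = w ∨ a = y := by
      intro a
      by_cases haA : a ∈ A
      · rw [hAe] at haA
        rcases Finset.mem_insert.mp haA with h | h
        · exact Or.inr (Or.inr (Or.inl h))
        · rw [Finset.mem_singleton] at h
          exact Or.inr (Or.inr (Or.inr h))
      · have hmem : a ∈ Aᶜ := mem_compl.mpr haA
        rw [hBe] at hmem
        rcases Finset.mem_insert.mp hmem with h | h
        · exact Or.inl h
        · rw [Finset.mem_singleton] at h
          exact Or.inr (Or.inl h)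
    have hnadj_vy : ¬ G.Adj v y := fun h => hyw (brnch_adj_root hw hyA h)
    have hnb : G.neighborFinset v = {u2, w} := by
      ext a
      rw [SimpleGraph.mem_neighborFinset]
      constructor
      · intro hadj
        rcases hclassify a with rfl | rfl | rfl | rfl
        · exact absurd hadj (G.irrefl)
        · simp
        · simp
        · exact absurd hadj hnadj_vy
      · intro ha
        rcases Finset.mem_insert.mp ha with rfl | ha
        · exact hu2
        · rw [Finset.mem_singleton.mp ha]; exact hw
    have hdv : G.degree v = 2 := by
      rw [← SimpleGraph.card_neighborFinset_eq_degree, hnb, hcardnb]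
    have hdegall : ∀ z : V, G.degree z ≤ 2 := by
      intro z
      rcases hclassify z with rfl | rfl | rfl | rfl
      · exact hdv.le
      · refine (deg_le_of_nbhd_subset (t := {v}) ?_).trans (by simp)
        intro a hadj
        rcases hclassify a with rfl | rfl | rfl | rfl
        · simp
        · exact absurd hadj (G.irrefl)
        · exact absurd (brnch_adj_closed hwA hadj.symm hu2v) hu2A
        · exact absurd (brnch_adj_closed hyA hadj.symm hu2v) hu2A
      · refine (deg_le_of_nbhd_subset (t := {v, y}) ?_).trans
          (by simpa using Finset.card_insert_le v ({y} : Finset V))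
        intro a hadj
        rcases hclassify a with rfl | rfl | rfl | rfl
        · simp
        · exact absurd (brnch_adj_closed hwA hadj hu2v) hu2A
        · exact absurd hadj (G.irrefl)
        · simp
      · refine (deg_le_of_nbhd_subset (t := {w}) ?_).trans (by simp)
        intro a hadj
        rcases hclassify a with rfl | rfl | rfl | rfl
        · exact absurd hadj.symm hnadj_vy
        · exact absurd (brnch_adj_closed hyA hadj hu2v) hu2A
        · simp
        · exact absurd hadj (G.irrefl)
    exact h23 ⟨hcard4, hdv, hdegall⟩
  have hC23b : ¬ (n = 3 ∧ M = 1) := by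
    rintro ⟨hn', hM'⟩
    have hAe : A = {w} := hAeq_of_M1 hM'
    obtain ⟨y, hyB, hyv, hyu2⟩ : ∃ y, y ∈ Aᶜ ∧ y ≠ v ∧ y ≠ u2 := by
      by_contra hcon
      push_neg at hcon
      have hsubB : Aᶜ ⊆ {v, u2} := by
        intro a ha
        rcases eq_or_ne a v with rfl | h1
        · simp
        · have := hcon a ha h1
          simp [this]
      have hFBsub : FB ⊆ {({v} : Finset V), {v, u2}} := by
        intro s hs
        rw [hFB, mem_filter] at hs
        rcases classify_pair_subsets hs.2.2.1 (hs.2.2.2.trans hsubB) with h | h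
        · simp [h]
        · simp [h]
      have hle := Finset.card_le_card hFBsub
      have hc2 : ({({v} : Finset V), {v, u2}} : Finset (Finset V)).card ≤ 2 := by
        simpa using Finset.card_insert_le ({v} : Finset V) ({({v, u2} : Finset V)} : Finset (Finset V))
      omega
    have hwyB : w ∉ Aᶜ := by rw [mem_compl]; exact fun h => h hwA
    have hyw : y ≠ w := fun h => hwyB (h ▸ hyB)
    have hBe : Aᶜ = {v, u2, y} := by
      have hc3 : ({v, u2, y} : Finset V).card = 3 := by
        rw [Finset.card_insert_of_notMem, Finset.card_insert_of_notMem,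
          Finset.card_singleton]
        · rw [Finset.mem_singleton]; exact fun h => hyu2 h.symm
        · simp only [Finset.mem_insert, Finset.mem_singleton]
          push_neg
          exact ⟨fun h => hu2v h.symm, fun h => hyv h.symm⟩
      refine (Finset.eq_of_subset_of_card_le ?_ (by omega)).symm
      intro a ha
      simp only [Finset.mem_insert, Finset.mem_singleton] at ha
      rcases ha with rfl | rfl | rfl
      · exact mem_compl.mpr hvA
      · exact mem_compl.mpr hu2A
      · exact hyB
    by_cases hady : G.Adj v y
    · -- four distinct subtrees in FB, contradicting n = 3
      have hpy : ({v, y} : Finset V) ∈ FB := by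
        rw [hFB, mem_filter]
        refine ⟨mem_univ _, isSubtree_pair hady, by simp, ?_⟩
        intro a ha
        rcases Finset.mem_insert.mp ha with rfl | ha
        · exact mem_compl.mpr hvA
        · rw [Finset.mem_singleton.mp ha]; exact hyB
      have htr : ({v, u2, y} : Finset V) ∈ FB := by
        rw [hFB, mem_filter]
        refine ⟨mem_univ _, ?_, by simp, by rw [hBe]⟩
        apply isSubtree_of_walks (r := v) (by simp)
        intro u hu
        simp only [Finset.mem_insert, Finset.mem_singleton] at hu
        rcases hu with rfl | rfl | rfl
        · exact ⟨Walk.nil, by simp⟩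
        · exact ⟨hu2.toWalk, by simp [SimpleGraph.Adj.toWalk]⟩
        · exact ⟨hady.toWalk, by simp [SimpleGraph.Adj.toWalk]⟩
      have ne2 : ({v} : Finset V) ≠ {v, y} := by
        intro h
        have : y ∈ ({v} : Finset V) := by rw [h]; simp
        exact hyv (Finset.mem_singleton.mp this)
      have ne3 : ({v} : Finset V) ≠ {v, u2, y} := by
        intro h
        have : u2 ∈ ({v} : Finset V) := by rw [h]; simp
        exact hu2v (Finset.mem_singleton.mp this)
      have ne4 : ({v, u2} : Finset V) ≠ {v, y} := by
        intro h
        have : u2 ∈ ({v, y} : Finset V) := by rw [← h]; simp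
        simp only [Finset.mem_insert, Finset.mem_singleton] at this
        rcases this with h' | h'
        · exact hu2v h'
        · exact hyu2 h'.symm
      have ne5 : ({v, u2} : Finset V) ≠ {v, u2, y} := by
        intro h
        have : y ∈ ({v, u2} : Finset V) := by rw [h]; simp
        simp only [Finset.mem_insert, Finset.mem_singleton] at this
        rcases this with h' | h'
        · exact hyv h'
        · exact hyu2 h'
      have ne6 : ({v, y} : Finset V) ≠ {v, u2, y} := by
        intro h
        have : u2 ∈ ({v, y} : Finset V) := by rw [h]; simp
        simp only [Finset.mem_insert, Finset.mem_singleton] at this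
        rcases this with h' | h'
        · exact hu2v h'
        · exact hyu2 h'.symm
      have hsub4 : ({({v} : Finset V), {v, u2}, {v, y}, {v, u2, y}} : Finset (Finset V))
          ⊆ FB := by
        intro s hs
        simp only [Finset.mem_insert, Finset.mem_singleton] at hs
        rcases hs with rfl | rfl | rfl | rfl
        · exact hvsing
        · exact hvpairB
        · exact hpy
        · exact htr
      have hc4 : ({({v} : Finset V), {v, u2}, {v, y}, {v, u2, y}} : Finset (Finset V)).card
          = 4 := by
        rw [Finset.card_insert_of_notMem (by simp [hsingne, ne2, ne3]),
          Finset.card_insert_of_notMem (by simp [ne4, ne5]),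
          Finset.card_insert_of_notMem (by simp [ne6]), Finset.card_singleton]
      have := Finset.card_le_card hsub4
      omega
    · -- the tree is P_{2,3}
      have hyA' : y ∉ A := mem_compl.mp hyB
      have hc3 : ({v, u2, y} : Finset V).card = 3 := by
        rw [Finset.card_insert_of_notMem, Finset.card_insert_of_notMem,
          Finset.card_singleton]
        · rw [Finset.mem_singleton]; exact fun h => hyu2 h.symm
        · simp only [Finset.mem_insert, Finset.mem_singleton]
          push_neg
          exact ⟨fun h => hu2v h.symm, fun h => hyv h.symm⟩
      have hcard4 : Fintype.card V = 4 := by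
        rw [← Finset.card_add_card_compl A, hBe, hc3, hAe, Finset.card_singleton]
      have hclassify : ∀ a : V, a = v ∨ a = u2 ∨ a = y ∨ a = w := by
        intro a
        by_cases haA : a ∈ A
        · rw [hAe, Finset.mem_singleton] at haA
          exact Or.inr (Or.inr (Or.inr haA))
        · have hmem : a ∈ Aᶜ := mem_compl.mpr haA
          rw [hBe] at hmem
          simp only [Finset.mem_insert, Finset.mem_singleton] at hmem
          rcases hmem with h | h | h
          · exact Or.inl h
          · exact Or.inr (Or.inl h)
          · exact Or.inr (Or.inr (Or.inl h))
      have hnb : G.neighborFinset v = {u2, w} := by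
        ext a
        rw [SimpleGraph.mem_neighborFinset]
        constructor
        · intro hadj
          rcases hclassify a with rfl | rfl | rfl | rfl
          · exact absurd hadj (G.irrefl)
          · simp
          · exact absurd hadj hady
          · simp
        · intro ha
          rcases Finset.mem_insert.mp ha with rfl | ha
          · exact hu2
          · rw [Finset.mem_singleton.mp ha]; exact hw
      have hdv : G.degree v = 2 := by
        rw [← SimpleGraph.card_neighborFinset_eq_degree, hnb, hcardnb]
      have hdegall : ∀ z : V, G.degree z ≤ 2 := by
        intro z
        rcases hclassify z with rfl | rfl | rfl | rfl
        · exact hdv.le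
        · refine (deg_le_of_nbhd_subset (t := {v, y}) ?_).trans
            (by simpa using Finset.card_insert_le v ({y} : Finset V))
          intro a hadj
          rcases hclassify a with rfl | rfl | rfl | rfl
          · simp
          · exact absurd hadj (G.irrefl)
          · simp
          · exact absurd (brnch_adj_closed hwA hadj.symm hu2v) hu2A
        · refine (deg_le_of_nbhd_subset (t := {u2}) ?_).trans (by simp)
          intro a hadj
          rcases hclassify a with rfl | rfl | rfl | rfl
          · exact absurd hadj.symm hady
          · simp
          · exact absurd hadj (G.irrefl)
          · exact absurd (brnch_adj_closed hwA hadj.symm hyv) hyA'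
        · refine (deg_le_of_nbhd_subset (t := {v}) ?_).trans (by simp)
          intro a hadj
          rcases hclassify a with rfl | rfl | rfl | rfl
          · simp
          · exact absurd (brnch_adj_closed hwA hadj hu2v) hu2A
          · exact absurd (brnch_adj_closed hwA hadj hyv) hyA'
          · exact absurd hadj (G.irrefl)
      exact h23 ⟨hcard4, hdv, hdegall⟩
  -- key arithmetic
  have hkey : n + 3 * M + 1 ≤ 2 * (n * M) := by
    by_cases hn2' : n = 2
    · have hM3 : 3 ≤ M := by
        by_contra hc
        push_neg at hc
        have hMc : M = 1 ∨ M = 2 := by omega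
        rcases hMc with h | h
        · exact hC22 ⟨hn2', h⟩
        · exact hC23a ⟨hn2', h⟩
      rw [hn2']; omega
    · by_cases hn3 : n = 3
      · have hM2 : 2 ≤ M := by
          by_contra hc
          push_neg at hc
          have hMc : M = 1 := by omega
          exact hC23b ⟨hn3, hMc⟩
        rw [hn3]; omega
      · have hn4 : 4 ≤ n := by omega
        have e1 : n * 1 ≤ n * M := Nat.mul_le_mul_left n hM1
        have e2 : 4 * M ≤ n * M := Nat.mul_le_mul_right M hn4
        generalize hq : n * M = q at e1 e2 ⊢
        omega
  -- conclude
  rw [ge_iff_le, hNcard, hRcard]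
  have E1 : 3 * (M + 1) * (2 * RB) ≤ 3 * (M + 1) * (n ^ 2 + n) :=
    Nat.mul_le_mul_left _ h2RB
  have E2 : 3 * n * (2 * SAs) ≤ 3 * n * (M ^ 2 + M) :=
    Nat.mul_le_mul_left _ h2SA
  have E3 : (n * (M + 1)) * (n + 3 * M + 1) ≤ (n * (M + 1)) * (2 * (n * M)) :=
    Nat.mul_le_mul_left _ hkey
  nlinarith [E1, E2, E3]

/-- for a tree rooted at `v` with `deg(v) ≥ 2` which is neither `P_{2,2}`
nor `P_{2,3}`, one has `N_v² + N_v ≥ 3 R_v`. -/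
theorem Nv_sq_add_Nv_ge_three_Rv
    [Fintype V] [DecidableEq V] (G : SimpleGraph V) [DecidableRel G.Adj]
    (hT : G.IsTree) (v : V) (hdeg : 2 ≤ G.degree v)
    (h22 : ¬ IsP22 G v) (h23 : ¬ IsP23 G v) :
    numSubtreesAt G v ^ 2 + numSubtreesAt G v ≥ 3 * sumSubtreesAt G v :=
  Nv_sq_add_Nv_ge_three_Rv' G hT v hdeg h22 h23
end

section
/- Let T be a finite tree rooted at a vertex v with deg(v) ≥ 2, and suppose T = T₁ ∪_v T₂, i.e., T₁ and T₂ are subtrees of T each containing v and each having at least two vertices, whose vertex sets have union equal to the vertex set of T and intersection equal to {v}. If both rooted trees (T₁, v) and (T₂, v) satisfy N_v^{(i)} N_{Tᵢ} − (N_v^{(i)})² + N_{Tᵢ} − N_v^{(i)} ≥ 3(R_{Tᵢ} − R_v^{(i)}) (where the superscript (i) indicates the quantities computed in Tᵢ), then (T, v) satisfies N_v N_T − N_v² + N_T − N_v ≥ 3(R_T − R_v). -/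
variable {V : Type*}

open SimpleGraph Finset

namespace NNaux

/-- Induced subgraph of an induced subgraph is an induced subgraph on the image. -/
noncomputable def induceInduceIso (G : SimpleGraph V) (s : Set V) (u : Set s) :
    (G.induce s).induce u ≃g G.induce (Subtype.val '' u) where
  toEquiv := Equiv.Set.image Subtype.val u Subtype.val_injective
  map_rel_iff' := Iff.rfl

lemma exists_path_subset [DecidableEq V] {G : SimpleGraph V} {t : Set V} {x y : V} (hx : x ∈ t) (hy : y ∈ t)
    (h : (G.induce t).Reachable ⟨x, hx⟩ ⟨y, hy⟩) :
    ∃ p : G.Walk x y, p.IsPath ∧ ∀ z ∈ p.support, z ∈ t := by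
  obtain ⟨w⟩ := h
  let w' := w.map (SimpleGraph.Embedding.induce t).toHom
  refine ⟨w'.toPath.1, w'.toPath.2, fun z hz => ?_⟩
  have hz' : z ∈ w'.support := SimpleGraph.Walk.support_toPath_subset _ hz
  rw [SimpleGraph.Walk.support_map] at hz'
  obtain ⟨a, _, rfl⟩ := List.mem_map.1 hz'
  exact a.2

lemma reachable_induce_of_walk {G : SimpleGraph V} {t : Set V} {x y : V} (p : G.Walk x y)
    (hs : ∀ z ∈ p.support, z ∈ t) (hx : x ∈ t) (hy : y ∈ t) :
    (G.induce t).Reachable ⟨x, hx⟩ ⟨y, hy⟩ := by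
  induction p with
  | nil => rfl
  | @cons a b c h q ih =>
      have hb : b ∈ t := hs b (by simp)
      have step : (G.induce t).Adj ⟨a, hx⟩ ⟨b, hb⟩ := h
      exact step.reachable.trans (ih (fun z hz => hs z (by simp [hz])) hb hy)


lemma isPath_append {G : SimpleGraph V} {x v y : V} {p : G.Walk x v} {q : G.Walk v y}
    (hp : p.IsPath) (hq : q.IsPath) (hint : ∀ z, z ∈ p.support → z ∈ q.support → z = v) :
    (p.append q).IsPath := by
  rw [SimpleGraph.Walk.isPath_def, SimpleGraph.Walk.support_append, List.nodup_append]
  have hvtail : v ∉ q.support.tail := by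
    have := hq.support_nodup
    rw [q.support_eq_cons] at this
    exact (List.nodup_cons.1 this).1
  refine ⟨hp.support_nodup, ?_, ?_⟩
  · have := hq.support_nodup
    rw [q.support_eq_cons] at this
    exact (List.nodup_cons.1 this).2
  · intro z hzp w hzq hzw
    rw [← hzw] at hzq
    have hz : z ∈ q.support := by rw [q.support_eq_cons]; exact List.mem_cons_of_mem _ hzq
    exact hvtail ((hint z hzp hz) ▸ hzq)

lemma isSubtree_induce_iff [Fintype V] [DecidableEq V] (G : SimpleGraph V) (s₁ : Finset V)
    (t : Finset ((↑s₁ : Set V))) :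
    IsSubtree (G.induce (↑s₁ : Set V)) t ↔ IsSubtree G (t.image Subtype.val) := by
  classical
  unfold IsSubtree
  have h1 : (t.image Subtype.val : Set V) = Subtype.val '' (↑t : Set ((↑s₁:Set V))) := by
    simp [Finset.coe_image]
  rw [h1, Finset.image_nonempty]
  constructor
  · rintro ⟨hne, hc⟩
    exact ⟨hne, (induceInduceIso G (↑s₁ : Set V) (↑t)).connected_iff.1 hc⟩
  · rintro ⟨hne, hc⟩
    exact ⟨hne, (induceInduceIso G (↑s₁ : Set V) (↑t)).connected_iff.2 hc⟩

lemma isSubtree_singleton [Fintype V] (G : SimpleGraph V) (v : V) :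
    IsSubtree G ({v} : Finset V) := by
  refine ⟨⟨v, Finset.mem_singleton_self v⟩, ?_⟩
  rw [Finset.coe_singleton]
  rw [connected_iff_exists_forall_reachable]
  refine ⟨⟨v, rfl⟩, fun w => ?_⟩
  have : w = ⟨v, rfl⟩ := Subtype.ext w.2
  rw [this]

lemma path_support_subset [Fintype V] [DecidableEq V] {G : SimpleGraph V} (hT : G.IsTree)
    {s₁ : Finset V} (hc₁ : (G.induce (↑s₁ : Set V)).Connected)
    {x y : V} (hx : x ∈ s₁) (hy : y ∈ s₁) {p : G.Walk x y} (hp : p.IsPath) :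
    ∀ z ∈ p.support, z ∈ s₁ := by
  obtain ⟨q, hq, hqs⟩ := exists_path_subset (Finset.mem_coe.2 hx) (Finset.mem_coe.2 hy)
    (hc₁.preconnected _ _)
  have heq : (⟨p, hp⟩ : G.Path x y) = ⟨q, hq⟩ := hT.IsAcyclic.path_unique _ _
  have hpq : p = q := congrArg Subtype.val heq
  intro z hz
  exact hqs z (hpq ▸ hz)

lemma no_cross_edge [Fintype V] [DecidableEq V] {G : SimpleGraph V} (hT : G.IsTree)
    {v : V} {s₁ s₂ : Finset V} (hv₁ : v ∈ s₁) (hv₂ : v ∈ s₂)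
    (hc₁ : (G.induce (↑s₁ : Set V)).Connected) (hc₂ : (G.induce (↑s₂ : Set V)).Connected)
    (hinter : s₁ ∩ s₂ = {v}) {u w : V} (hadj : G.Adj u w)
    (hu : u ∈ s₁) (hune : u ≠ v) (hw : w ∈ s₂) (hwne : w ≠ v) : False := by
  obtain ⟨P, hP, hPs⟩ := exists_path_subset (Finset.mem_coe.2 hu) (Finset.mem_coe.2 hv₁)
    (hc₁.preconnected _ _)
  obtain ⟨Q, hQ, hQs⟩ := exists_path_subset (Finset.mem_coe.2 hv₂) (Finset.mem_coe.2 hw)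
    (hc₂.preconnected _ _)
  have hR : (P.append Q).IsPath := by
    refine isPath_append hP hQ (fun z hzP hzQ => ?_)
    have hz : z ∈ s₁ ∩ s₂ := Finset.mem_inter.2 ⟨hPs z hzP, hQs z hzQ⟩
    rw [hinter] at hz
    exact Finset.mem_singleton.1 hz
  have hE : (SimpleGraph.Walk.cons hadj SimpleGraph.Walk.nil).IsPath := by
    rw [SimpleGraph.Walk.cons_isPath_iff]
    simp [hadj.ne]
  have heq : (⟨P.append Q, hR⟩ : G.Path u w) = ⟨_, hE⟩ := hT.IsAcyclic.path_unique _ _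
  have hvsup : v ∈ (P.append Q).support := by
    rw [SimpleGraph.Walk.support_append]
    exact List.mem_append_left _ P.end_mem_support
  rw [congrArg (fun (r : G.Path u w) => r.1.support) heq] at hvsup
  simp only [SimpleGraph.Walk.support_cons, SimpleGraph.Walk.support_nil] at hvsup
  rcases List.mem_cons.1 hvsup with h' | h'
  · exact hune h'.symm
  · exact hwne (List.mem_singleton.1 h').symm

lemma end_mem_of_walk_avoid [Fintype V] [DecidableEq V] {G : SimpleGraph V} (hT : G.IsTree)
    {v : V} {s₁ s₂ : Finset V} (hv₁ : v ∈ s₁) (hv₂ : v ∈ s₂)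
    (hc₁ : (G.induce (↑s₁ : Set V)).Connected) (hc₂ : (G.induce (↑s₂ : Set V)).Connected)
    (hinter : s₁ ∩ s₂ = {v}) (hunion : s₁ ∪ s₂ = Finset.univ)
    {x y : V} (p : G.Walk x y) (hx : x ∈ s₁) (hvp : v ∉ p.support) : y ∈ s₁ := by
  induction p with
  | nil => exact hx
  | @cons a b c h q ih =>
      have hane : a ≠ v := by
        rintro rfl
        exact hvp (SimpleGraph.Walk.start_mem_support _)
      have hvq : v ∉ q.support := by
        intro h'
        exact hvp (by rw [SimpleGraph.Walk.support_cons]; exact List.mem_cons_of_mem _ h')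
      have hb : b ∈ s₁ := by
        by_contra hb
        have hbs₂ : b ∈ s₂ := by
          have hbu : b ∈ s₁ ∪ s₂ := by rw [hunion]; exact Finset.mem_univ b
          rcases Finset.mem_union.1 hbu with h' | h'
          · exact absurd h' hb
          · exact h'
        have hbne : b ≠ v := by rintro rfl; exact hb hv₁
        exact no_cross_edge hT hv₁ hv₂ hc₁ hc₂ hinter h hx hane hbs₂ hbne
      exact ih hb hvq

lemma subtree_subset_of_mem [Fintype V] [DecidableEq V] {G : SimpleGraph V} (hT : G.IsTree)
    {v : V} {s₁ s₂ : Finset V} (hv₁ : v ∈ s₁) (hv₂ : v ∈ s₂)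
    (hc₁ : (G.induce (↑s₁ : Set V)).Connected) (hc₂ : (G.induce (↑s₂ : Set V)).Connected)
    (hinter : s₁ ∩ s₂ = {v}) (hunion : s₁ ∪ s₂ = Finset.univ)
    {u : Finset V} (hu : IsSubtree G u) (hvn : v ∉ u)
    {x : V} (hx : x ∈ u) (hxs : x ∈ s₁) : u ⊆ s₁ := by
  intro y hy
  obtain ⟨p, hp, hps⟩ := exists_path_subset (Finset.mem_coe.2 hx) (Finset.mem_coe.2 hy)
    (hu.2.preconnected _ _)
  have hvp : v ∉ p.support := fun h => hvn (hps v h)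
  exact end_mem_of_walk_avoid hT hv₁ hv₂ hc₁ hc₂ hinter hunion p hxs hvp

lemma isSubtree_inter [Fintype V] [DecidableEq V] {G : SimpleGraph V} (hT : G.IsTree)
    {v : V} {s₁ : Finset V} (hv₁ : v ∈ s₁)
    (hc₁ : (G.induce (↑s₁ : Set V)).Connected)
    {u : Finset V} (hu : IsSubtree G u) (hvu : v ∈ u) : IsSubtree G (u ∩ s₁) := by
  refine ⟨⟨v, Finset.mem_inter.2 ⟨hvu, hv₁⟩⟩, ?_⟩
  rw [SimpleGraph.connected_iff_exists_forall_reachable]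
  refine ⟨⟨v, Finset.mem_coe.2 (Finset.mem_inter.2 ⟨hvu, hv₁⟩)⟩, ?_⟩
  rintro ⟨w, hw⟩
  have hw' := Finset.mem_coe.1 hw
  rw [Finset.mem_inter] at hw'
  obtain ⟨p, hp, hps⟩ := exists_path_subset (Finset.mem_coe.2 hvu) (Finset.mem_coe.2 hw'.1)
    (hu.2.preconnected _ _)
  have hps₁ := path_support_subset hT hc₁ hv₁ hw'.2 hp
  exact reachable_induce_of_walk p
    (fun z hz => Finset.mem_coe.2 (Finset.mem_inter.2 ⟨hps z hz, hps₁ z hz⟩)) _ _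

lemma isSubtree_union [Fintype V] [DecidableEq V] {G : SimpleGraph V}
    {v : V} {t₁ t₂ : Finset V}
    (h₁ : IsSubtree G t₁) (h₂ : IsSubtree G t₂) (hv₁ : v ∈ t₁) (hv₂ : v ∈ t₂) :
    IsSubtree G (t₁ ∪ t₂) := by
  refine ⟨⟨v, Finset.mem_union_left _ hv₁⟩, ?_⟩
  rw [Finset.coe_union]
  exact SimpleGraph.induce_union_connected h₁.2.preconnected h₂.2.preconnected
    ⟨v, Finset.mem_coe.2 hv₁, Finset.mem_coe.2 hv₂⟩

lemma sum_transfer [Fintype V] [DecidableEq V] (s₁ : Finset V)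
    (P : Finset V → Prop) [DecidablePred P] (hP : ∀ u, P u → u ⊆ s₁) (f : ℕ → ℕ) :
    ∑ t ∈ Finset.univ.filter (fun t : Finset ((↑s₁ : Set V)) => P (t.image Subtype.val)),
        f t.card
      = ∑ u ∈ Finset.univ.filter P, f u.card := by
  classical
  refine Finset.sum_bij (i := fun t _ => t.image Subtype.val) ?_ ?_ ?_ ?_
  · intro t ht
    simp only [Finset.mem_filter, Finset.mem_univ, true_and] at ht ⊢
    exact ht
  · intro t1 h1 t2 h2 h
    exact Finset.image_injective Subtype.val_injective h
  · intro u hu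
    simp only [Finset.mem_filter, Finset.mem_univ, true_and] at hu
    have himg : (u.attach.image (fun x => (⟨x.1, Finset.mem_coe.2 (hP u hu x.2)⟩ :
        ((↑s₁ : Set V))))).image Subtype.val = u := by
      rw [Finset.image_image]
      exact Finset.attach_image_val
    exact ⟨u.attach.image (fun x => (⟨x.1, Finset.mem_coe.2 (hP u hu x.2)⟩ :
      ((↑s₁ : Set V)))), by
        simp only [Finset.mem_filter, Finset.mem_univ, true_and, himg]; exact hu, himg⟩
  · intro t ht
    rw [Finset.card_image_of_injective _ Subtype.val_injective]

open Classical in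
lemma transfer_num_all [Fintype V] [DecidableEq V] (G : SimpleGraph V) (s₁ : Finset V) :
    numSubtrees (G.induce (↑s₁ : Set V))
      = (Finset.univ.filter (fun u : Finset V => u ⊆ s₁ ∧ IsSubtree G u)).card := by
  classical
  simp only [numSubtrees, Finset.filter_congr_decidable]
  rw [Finset.card_eq_sum_ones, Finset.card_eq_sum_ones]
  refine Eq.trans (Finset.sum_congr ?_ (fun _ _ => rfl))
    (sum_transfer s₁ (fun u => u ⊆ s₁ ∧ IsSubtree G u) (fun u hu => hu.1) (fun _ => 1))
  apply Finset.filter_congr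
  intro t _
  rw [isSubtree_induce_iff]
  exact ⟨fun h => ⟨fun z hz => by
    obtain ⟨a, _, rfl⟩ := Finset.mem_image.1 hz; exact Finset.mem_coe.1 a.2, h⟩,
    fun h => h.2⟩

open Classical in
lemma transfer_sum_all [Fintype V] [DecidableEq V] (G : SimpleGraph V) (s₁ : Finset V) :
    sumSubtrees (G.induce (↑s₁ : Set V))
      = ∑ u ∈ Finset.univ.filter (fun u : Finset V => u ⊆ s₁ ∧ IsSubtree G u), u.card := by
  classical
  simp only [sumSubtrees, Finset.filter_congr_decidable]
  refine Eq.trans (Finset.sum_congr ?_ (fun _ _ => rfl))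
    (sum_transfer s₁ (fun u => u ⊆ s₁ ∧ IsSubtree G u) (fun u hu => hu.1) (fun n => n))
  apply Finset.filter_congr
  intro t _
  rw [isSubtree_induce_iff]
  exact ⟨fun h => ⟨fun z hz => by
    obtain ⟨a, _, rfl⟩ := Finset.mem_image.1 hz; exact Finset.mem_coe.1 a.2, h⟩,
    fun h => h.2⟩

lemma mem_image_val_iff [DecidableEq V] {s₁ : Finset V} {v : V} (hv₁ : v ∈ s₁)
    (t : Finset ((↑s₁ : Set V))) :
    (⟨v, Finset.mem_coe.2 hv₁⟩ : ((↑s₁ : Set V))) ∈ t ↔ v ∈ t.image Subtype.val := by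
  constructor
  · intro h
    exact Finset.mem_image.2 ⟨_, h, rfl⟩
  · intro h
    obtain ⟨a, ha, hav⟩ := Finset.mem_image.1 h
    have : a = ⟨v, Finset.mem_coe.2 hv₁⟩ := Subtype.ext hav
    exact this ▸ ha

open Classical in
lemma transfer_num_at [Fintype V] [DecidableEq V] (G : SimpleGraph V) (s₁ : Finset V)
    (v : V) (hv₁ : v ∈ s₁) :
    numSubtreesAt (G.induce (↑s₁ : Set V)) ⟨v, Finset.mem_coe.2 hv₁⟩
      = (Finset.univ.filter (fun u : Finset V => u ⊆ s₁ ∧ IsSubtree G u ∧ v ∈ u)).card := by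
  classical
  simp only [numSubtreesAt, Finset.filter_congr_decidable]
  rw [Finset.card_eq_sum_ones, Finset.card_eq_sum_ones]
  refine Eq.trans (Finset.sum_congr ?_ (fun _ _ => rfl))
    (sum_transfer s₁ (fun u => u ⊆ s₁ ∧ IsSubtree G u ∧ v ∈ u) (fun u hu => hu.1) (fun _ => 1))
  ext t
  simp only [Finset.mem_filter, Finset.mem_univ, true_and]
  rw [isSubtree_induce_iff, mem_image_val_iff hv₁]
  exact ⟨fun h => ⟨fun z hz => by
    obtain ⟨a, _, rfl⟩ := Finset.mem_image.1 hz; exact Finset.mem_coe.1 a.2, h.1, h.2⟩,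
    fun h => ⟨h.2.1, h.2.2⟩⟩

open Classical in
lemma transfer_sum_at [Fintype V] [DecidableEq V] (G : SimpleGraph V) (s₁ : Finset V)
    (v : V) (hv₁ : v ∈ s₁) :
    sumSubtreesAt (G.induce (↑s₁ : Set V)) ⟨v, Finset.mem_coe.2 hv₁⟩
      = ∑ u ∈ Finset.univ.filter
          (fun u : Finset V => u ⊆ s₁ ∧ IsSubtree G u ∧ v ∈ u), u.card := by
  classical
  simp only [sumSubtreesAt, Finset.filter_congr_decidable]
  refine Eq.trans (Finset.sum_congr ?_ (fun _ _ => rfl))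
    (sum_transfer s₁ (fun u => u ⊆ s₁ ∧ IsSubtree G u ∧ v ∈ u) (fun u hu => hu.1) (fun n => n))
  ext t
  simp only [Finset.mem_filter, Finset.mem_univ, true_and]
  rw [isSubtree_induce_iff, mem_image_val_iff hv₁]
  exact ⟨fun h => ⟨fun z hz => by
    obtain ⟨a, _, rfl⟩ := Finset.mem_image.1 hz; exact Finset.mem_coe.1 a.2, h.1, h.2⟩,
    fun h => ⟨h.2.1, h.2.2⟩⟩

end NNaux

/-- if `T = T₁ ∪_v T₂` is the union of two subtrees `T₁, T₂` (each of order
at least 2) meeting exactly in the root `v`, and both `(T₁, v)` and `(T₂, v)` satisfy the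
inequality `N_v N_T − N_v² + N_T − N_v ≥ 3(R_T − R_v)`, then so does `(T, v)`. -/
theorem NN_ineq_of_union
    [Fintype V] [DecidableEq V] (G : SimpleGraph V) [DecidableRel G.Adj]
    (hT : G.IsTree) (v : V) (hdeg : 2 ≤ G.degree v)
    (s₁ s₂ : Finset V) (hv₁ : v ∈ s₁) (hv₂ : v ∈ s₂)
    (hs₁ : 2 ≤ s₁.card) (hs₂ : 2 ≤ s₂.card)
    (hc₁ : (G.induce (s₁ : Set V)).Connected) (hc₂ : (G.induce (s₂ : Set V)).Connected)
    (hunion : s₁ ∪ s₂ = Finset.univ) (hinter : s₁ ∩ s₂ = {v})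
    (h₁ :
      letI G₁ := G.induce (s₁ : Set V)
      letI r : (s₁ : Set V) := ⟨v, hv₁⟩
      (numSubtreesAt G₁ r : ℤ) * numSubtrees G₁ - (numSubtreesAt G₁ r : ℤ) ^ 2
          + numSubtrees G₁ - numSubtreesAt G₁ r ≥
        3 * ((sumSubtrees G₁ : ℤ) - sumSubtreesAt G₁ r))
    (h₂ :
      letI G₂ := G.induce (s₂ : Set V)
      letI r : (s₂ : Set V) := ⟨v, hv₂⟩
      (numSubtreesAt G₂ r : ℤ) * numSubtrees G₂ - (numSubtreesAt G₂ r : ℤ) ^ 2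
          + numSubtrees G₂ - numSubtreesAt G₂ r ≥
        3 * ((sumSubtrees G₂ : ℤ) - sumSubtreesAt G₂ r)) :
    (numSubtreesAt G v : ℤ) * numSubtrees G - (numSubtreesAt G v : ℤ) ^ 2
        + numSubtrees G - numSubtreesAt G v ≥
      3 * ((sumSubtrees G : ℤ) - sumSubtreesAt G v) := by
  classical
  have hinter' : s₂ ∩ s₁ = {v} := by rw [Finset.inter_comm]; exact hinter
  have hunion' : s₂ ∪ s₁ = Finset.univ := by rw [Finset.union_comm]; exact hunion
  set F₁ := Finset.univ.filter (fun u : Finset V => u ⊆ s₁ ∧ IsSubtree G u ∧ v ∈ u) with hF₁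
  set F₂ := Finset.univ.filter (fun u : Finset V => u ⊆ s₂ ∧ IsSubtree G u ∧ v ∈ u) with hF₂
  set D₁ := Finset.univ.filter (fun u : Finset V => u ⊆ s₁ ∧ IsSubtree G u ∧ v ∉ u) with hD₁
  set D₂ := Finset.univ.filter (fun u : Finset V => u ⊆ s₂ ∧ IsSubtree G u ∧ v ∉ u) with hD₂
  -- cut of all subtrees at v
  have hcut : Finset.univ.filter (fun u : Finset V => IsSubtree G u)
      = Finset.univ.filter (fun u : Finset V => IsSubtree G u ∧ v ∈ u)
        ∪ Finset.univ.filter (fun u : Finset V => IsSubtree G u ∧ v ∉ u) := by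
    ext u
    simp only [Finset.mem_filter, Finset.mem_union, Finset.mem_univ, true_and]
    tauto
  have hcutdisj : Disjoint
      (Finset.univ.filter (fun u : Finset V => IsSubtree G u ∧ v ∈ u))
      (Finset.univ.filter (fun u : Finset V => IsSubtree G u ∧ v ∉ u)) := by
    rw [Finset.disjoint_left]
    intro u h1 h2
    simp only [Finset.mem_filter, Finset.mem_univ, true_and] at h1 h2
    exact h2.2 h1.2
  -- subtrees avoiding v live on one side
  have hDsplit : Finset.univ.filter (fun u : Finset V => IsSubtree G u ∧ v ∉ u) = D₁ ∪ D₂ := by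
    rw [hD₁, hD₂]
    ext u
    simp only [Finset.mem_filter, Finset.mem_union, Finset.mem_univ, true_and]
    constructor
    · rintro ⟨hu, hvn⟩
      obtain ⟨x, hx⟩ := hu.1
      have hxu : x ∈ s₁ ∨ x ∈ s₂ := by
        have hx' := Finset.mem_univ x
        rw [← hunion] at hx'
        exact Finset.mem_union.1 hx'
      rcases hxu with h' | h'
      · exact Or.inl ⟨NNaux.subtree_subset_of_mem hT hv₁ hv₂ hc₁ hc₂ hinter hunion hu hvn hx h',
          hu, hvn⟩
      · exact Or.inr ⟨NNaux.subtree_subset_of_mem hT hv₂ hv₁ hc₂ hc₁ hinter' hunion' hu hvn hx h',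
          hu, hvn⟩
    · rintro (⟨-, hu, hvn⟩ | ⟨-, hu, hvn⟩) <;> exact ⟨hu, hvn⟩
  have hDdisj : Disjoint D₁ D₂ := by
    rw [Finset.disjoint_left]
    intro u h1 h2
    rw [hD₁, Finset.mem_filter] at h1
    rw [hD₂, Finset.mem_filter] at h2
    have hsub : u ⊆ s₁ ∩ s₂ := fun x hx => Finset.mem_inter.2 ⟨h1.2.1 hx, h2.2.1 hx⟩
    rw [hinter] at hsub
    obtain ⟨x, hx⟩ := h1.2.2.1.1
    have hxv : x = v := Finset.mem_singleton.1 (hsub hx)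
    exact h1.2.2.2 (hxv ▸ hx)
  -- side cuts
  have hcut₁ : Finset.univ.filter (fun u : Finset V => u ⊆ s₁ ∧ IsSubtree G u) = F₁ ∪ D₁ := by
    rw [hF₁, hD₁]
    ext u
    simp only [Finset.mem_filter, Finset.mem_union, Finset.mem_univ, true_and]
    tauto
  have hcut₂ : Finset.univ.filter (fun u : Finset V => u ⊆ s₂ ∧ IsSubtree G u) = F₂ ∪ D₂ := by
    rw [hF₂, hD₂]
    ext u
    simp only [Finset.mem_filter, Finset.mem_union, Finset.mem_univ, true_and]
    tauto
  have hfd₁ : Disjoint F₁ D₁ := by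
    rw [Finset.disjoint_left]
    intro u h1 h2
    rw [hF₁, Finset.mem_filter] at h1
    rw [hD₁, Finset.mem_filter] at h2
    exact h2.2.2.2 h1.2.2.2
  have hfd₂ : Disjoint F₂ D₂ := by
    rw [Finset.disjoint_left]
    intro u h1 h2
    rw [hF₂, Finset.mem_filter] at h1
    rw [hD₂, Finset.mem_filter] at h2
    exact h2.2.2.2 h1.2.2.2
  -- global identities
  have eqN : numSubtrees G = numSubtreesAt G v + (D₁.card + D₂.card) := by
    simp only [numSubtrees, numSubtreesAt, Finset.filter_congr_decidable]
    rw [hcut, Finset.card_union_of_disjoint hcutdisj, hDsplit,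
      Finset.card_union_of_disjoint hDdisj]
    congr 2
    ext u
    simp only [Finset.mem_filter]
  have eqR : sumSubtrees G
      = sumSubtreesAt G v + ((∑ u ∈ D₁, u.card) + ∑ u ∈ D₂, u.card) := by
    simp only [sumSubtrees, sumSubtreesAt, Finset.filter_congr_decidable]
    rw [hcut, Finset.sum_union hcutdisj, hDsplit, Finset.sum_union hDdisj]
    congr 2
    ext u
    simp only [Finset.mem_filter]
  -- product structure at v
  have eqNv : numSubtreesAt G v = F₁.card * F₂.card := by
    simp only [numSubtreesAt, Finset.filter_congr_decidable]
    rw [← Finset.card_product]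
    refine Finset.card_bij' (fun u _ => (u ∩ s₁, u ∩ s₂)) (fun p _ => p.1 ∪ p.2) ?_ ?_ ?_ ?_
    · intro u hu
      simp only [Finset.mem_filter, Finset.mem_univ, true_and] at hu
      rw [Finset.mem_product]
      constructor
      · rw [hF₁, Finset.mem_filter]
        exact ⟨Finset.mem_univ _, Finset.inter_subset_right,
          NNaux.isSubtree_inter hT hv₁ hc₁ hu.1 hu.2,
          Finset.mem_inter.2 ⟨hu.2, hv₁⟩⟩
      · rw [hF₂, Finset.mem_filter]
        exact ⟨Finset.mem_univ _, Finset.inter_subset_right,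
          NNaux.isSubtree_inter hT hv₂ hc₂ hu.1 hu.2,
          Finset.mem_inter.2 ⟨hu.2, hv₂⟩⟩
    · intro p hp
      rw [Finset.mem_product] at hp
      obtain ⟨h1, h2⟩ := hp
      rw [hF₁, Finset.mem_filter] at h1
      rw [hF₂, Finset.mem_filter] at h2
      simp only [Finset.mem_filter, Finset.mem_univ, true_and]
      exact ⟨NNaux.isSubtree_union h1.2.2.1 h2.2.2.1 h1.2.2.2 h2.2.2.2,
        Finset.mem_union_left _ h1.2.2.2⟩
    · intro u hu
      show u ∩ s₁ ∪ u ∩ s₂ = u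
      rw [← Finset.inter_union_distrib_left, hunion, Finset.inter_univ]
    · intro p hp
      rw [Finset.mem_product] at hp
      obtain ⟨h1, h2⟩ := hp
      rw [hF₁, Finset.mem_filter] at h1
      rw [hF₂, Finset.mem_filter] at h2
      obtain ⟨t₁, t₂⟩ := p
      simp only [Prod.mk.injEq]
      constructor
      · ext x
        simp only [Finset.mem_inter, Finset.mem_union]
        constructor
        · rintro ⟨hx | hx, hxs⟩
          · exact hx
          · have hxv : x = v := by
              have : x ∈ s₁ ∩ s₂ := Finset.mem_inter.2 ⟨hxs, h2.2.1 hx⟩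
              rw [hinter] at this
              exact Finset.mem_singleton.1 this
            exact hxv ▸ h1.2.2.2
        · intro hx
          exact ⟨Or.inl hx, h1.2.1 hx⟩
      · ext x
        simp only [Finset.mem_inter, Finset.mem_union]
        constructor
        · rintro ⟨hx | hx, hxs⟩
          · have hxv : x = v := by
              have : x ∈ s₁ ∩ s₂ := Finset.mem_inter.2 ⟨h1.2.1 hx, hxs⟩
              rw [hinter] at this
              exact Finset.mem_singleton.1 this
            exact hxv ▸ h2.2.2.2
          · exact hx
        · intro hx
          exact ⟨Or.inr hx, h2.2.1 hx⟩
  -- side quantities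
  have eqN1 : numSubtrees (G.induce (↑s₁ : Set V)) = F₁.card + D₁.card := by
    rw [NNaux.transfer_num_all G s₁, hcut₁, Finset.card_union_of_disjoint hfd₁]
  have eqN2 : numSubtrees (G.induce (↑s₂ : Set V)) = F₂.card + D₂.card := by
    rw [NNaux.transfer_num_all G s₂, hcut₂, Finset.card_union_of_disjoint hfd₂]
  have eqR1 : sumSubtrees (G.induce (↑s₁ : Set V)) = (∑ u ∈ F₁, u.card) + ∑ u ∈ D₁, u.card := by
    rw [NNaux.transfer_sum_all G s₁, hcut₁, Finset.sum_union hfd₁]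
  have eqR2 : sumSubtrees (G.induce (↑s₂ : Set V)) = (∑ u ∈ F₂, u.card) + ∑ u ∈ D₂, u.card := by
    rw [NNaux.transfer_sum_all G s₂, hcut₂, Finset.sum_union hfd₂]
  have eqNv1 : numSubtreesAt (G.induce (↑s₁ : Set V)) ⟨v, hv₁⟩ = F₁.card :=
    NNaux.transfer_num_at G s₁ v hv₁
  have eqNv2 : numSubtreesAt (G.induce (↑s₂ : Set V)) ⟨v, hv₂⟩ = F₂.card :=
    NNaux.transfer_num_at G s₂ v hv₂
  have eqRv1 : sumSubtreesAt (G.induce (↑s₁ : Set V)) ⟨v, hv₁⟩ = ∑ u ∈ F₁, u.card :=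
    NNaux.transfer_sum_at G s₁ v hv₁
  have eqRv2 : sumSubtreesAt (G.induce (↑s₂ : Set V)) ⟨v, hv₂⟩ = ∑ u ∈ F₂, u.card :=
    NNaux.transfer_sum_at G s₂ v hv₂
  -- positivity
  have hp₁ : 1 ≤ F₁.card := by
    refine Finset.card_pos.2 ⟨{v}, ?_⟩
    rw [hF₁, Finset.mem_filter]
    exact ⟨Finset.mem_univ _, Finset.singleton_subset_iff.2 hv₁,
      NNaux.isSubtree_singleton G v, Finset.mem_singleton_self v⟩
  have hp₂ : 1 ≤ F₂.card := by
    refine Finset.card_pos.2 ⟨{v}, ?_⟩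
    rw [hF₂, Finset.mem_filter]
    exact ⟨Finset.mem_univ _, Finset.singleton_subset_iff.2 hv₂,
      NNaux.isSubtree_singleton G v, Finset.mem_singleton_self v⟩
  -- assemble
  rw [eqNv1, eqN1, eqRv1, eqR1] at h₁
  rw [eqNv2, eqN2, eqRv2, eqR2] at h₂
  rw [eqN, eqNv, eqR]
  push_cast at h₁ h₂ ⊢
  have k1 : (0:ℤ) ≤ (F₁.card : ℤ) * ((F₂.card : ℤ) - 1) * (D₁.card : ℤ) := by
    have hb : (1:ℤ) ≤ (F₂.card : ℤ) := by exact_mod_cast hp₂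
    have hb' : (0:ℤ) ≤ (F₂.card : ℤ) - 1 := by linarith
    exact mul_nonneg (mul_nonneg (Int.natCast_nonneg F₁.card) hb') (Int.natCast_nonneg D₁.card)
  have k2 : (0:ℤ) ≤ (F₂.card : ℤ) * ((F₁.card : ℤ) - 1) * (D₂.card : ℤ) := by
    have hb : (1:ℤ) ≤ (F₁.card : ℤ) := by exact_mod_cast hp₁
    have hb' : (0:ℤ) ≤ (F₁.card : ℤ) - 1 := by linarith
    exact mul_nonneg (mul_nonneg (Int.natCast_nonneg F₂.card) hb') (Int.natCast_nonneg D₂.card)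
  linarith [h₁, h₂, k1, k2]
end
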